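/- arXiv:2203.09156 — 5 statements merged into one kernel-verified Lean document; each statement's English description precedes it below -/
import Mathlib

section
/- Let K be a number field and let T be a finite set of places of K that contains no 2-adic place (i.e., no finite place lying above 2). Then for every family (x_v)_{v∈T} with x_v ∈ K_v and every ε > 0 there exists ξ ∈ K such that |ξ − x_v|_v < ε for every v ∈ T, and ξ lies in the valuation ring O_{K_v} for every finite place v ∉ T whose residue characteristic is different from 2. (Equivalently: K is dense in the ring of adèles of K with the 2-adic components removed.) -/
open IsDedekindDomain NumberField

open scoped Multiplicative

section Helpers

open IsDedekindDomain.HeightOneSpectrum NumberField.InfinitePlace Module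

lemma zm0_lt_of_ne_zero (c : WithZero (Multiplicative ℤ)) (hc : c ≠ 0) :
    ∃ N : ℕ, ∀ M : ℕ, N ≤ M → (↑(Multiplicative.ofAdd (-(M:ℤ))) : WithZero (Multiplicative ℤ)) < c := by
  obtain ⟨a, rfl⟩ := WithZero.ne_zero_iff_exists.mp hc
  refine ⟨(1 + |Multiplicative.toAdd a|).toNat, fun M hM => ?_⟩
  rw [WithZero.coe_lt_coe, show a = Multiplicative.ofAdd (Multiplicative.toAdd a) from rfl,
    Multiplicative.ofAdd_lt]
  have h1 : -(Multiplicative.toAdd a) ≤ |Multiplicative.toAdd a| := neg_le_abs _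
  have h2 : ((1 + |Multiplicative.toAdd a|).toNat : ℤ) = 1 + |Multiplicative.toAdd a| :=
    Int.toNat_of_nonneg (by positivity)
  omega

lemma zm0_bound {x e d γ : WithZero (Multiplicative ℤ)} (hd : d ≠ 0) (hx : x ≤ e) (he : e < γ * d) : x * d⁻¹ < γ := by
  have hx' : x < γ * d := lt_of_le_of_lt hx he
  have hdi : (0:WithZero (Multiplicative ℤ)) < d⁻¹ := lt_of_le_of_ne zero_le' (Ne.symm (inv_ne_zero hd))
  calc x * d⁻¹ < (γ * d) * d⁻¹ := mul_lt_mul_of_pos_right hx' hdi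
    _ = γ := by rw [mul_assoc, mul_inv_cancel₀ hd, mul_one]

lemma adic_dense {R : Type*} [CommRing R] [IsDedekindDomain R] {K : Type*} [Field K]
    [Algebra R K] [IsFractionRing R K] (v : HeightOneSpectrum R)
    (x : v.adicCompletion K) {γ : WithZero (Multiplicative ℤ)} (hγ : γ ≠ 0) :
    ∃ y : K, Valued.v ((y : v.adicCompletion K) - x) < γ := by
  have hd : DenseRange (fun y : K => (y : v.adicCompletion K)) :=
    denseRange_algebraMap K v
  have hU : {z : v.adicCompletion K | Valued.v (z - x) < γ} ∈ nhds x := by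
    obtain ⟨π, hπ⟩ := v.intValuation_exists_uniformizer
    obtain ⟨k, hk⟩ := zm0_lt_of_ne_zero γ hγ
    set p : v.adicCompletion K := ((algebraMap R K π : K) : v.adicCompletion K) ^ k with hp
    have hpv : Valued.v p = WithZero.exp (-(k:ℤ)) := by
      rw [hp, map_pow, valuedAdicCompletion_eq_valuation', valuation_of_algebraMap, hπ,
        ← WithZero.exp_nsmul]
      congr 1
      simp
    have hball := Valued.isOpen_ball (v.adicCompletion K) (Valued.v.restrict p)
    have hopen : IsOpen ((fun z => z - x) ⁻¹' {z | Valued.v.restrict z < Valued.v.restrict p}) :=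
      hball.preimage (continuous_id.sub continuous_const)
    refine Filter.mem_of_superset (hopen.mem_nhds ?_) ?_
    · simp only [Set.mem_preimage, Set.mem_setOf_eq, sub_self, map_zero]
      rw [Valuation.restrict_pos_iff, hpv]
      exact WithZero.exp_pos
    · intro z hz
      simp only [Set.mem_preimage, Set.mem_setOf_eq, Valuation.restrict_lt_iff] at hz
      rw [hpv] at hz
      exact lt_trans hz (hk k le_rfl)
  have hx : x ∈ closure (Set.range (fun y : K => (y : v.adicCompletion K))) := hd x
  obtain ⟨z, hz, y, rfl⟩ := mem_closure_iff_nhds.mp hx _ hU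
  exact ⟨y, hz⟩

/-- If the residue characteristic of `v` is not 2 then `2 ∉ v.asIdeal`. -/
lemma two_not_mem_of_ringChar_ne_two {K : Type*} [Field K] [NumberField K]
    (v : HeightOneSpectrum (𝓞 K)) (h : ringChar (𝓞 K ⧸ v.asIdeal) ≠ 2) :
    (2 : 𝓞 K) ∉ v.asIdeal := by
  intro h2
  haveI : Nontrivial (𝓞 K ⧸ v.asIdeal) := Ideal.Quotient.nontrivial_iff.mpr (v.isPrime.ne_top)
  have hq : ((2 : ℕ) : 𝓞 K ⧸ v.asIdeal) = 0 := by
    rw [Nat.cast_ofNat]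
    have h0 : Ideal.Quotient.mk v.asIdeal (2 : 𝓞 K) = 0 :=
      (Ideal.Quotient.eq_zero_iff_mem).mpr h2
    rw [← map_ofNat (Ideal.Quotient.mk v.asIdeal) 2]
    exact h0
  have hdvd : ringChar (𝓞 K ⧸ v.asIdeal) ∣ 2 := ringChar.dvd hq
  have h1 : ringChar (𝓞 K ⧸ v.asIdeal) ≠ 1 := CharP.ringChar_ne_one
  have := Nat.le_of_dvd (by norm_num) hdvd
  interval_cases hrc : ringChar (𝓞 K ⧸ v.asIdeal) <;> omega

lemma intValuation_two_eq_one {K : Type*} [Field K] [NumberField K]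
    (v : HeightOneSpectrum (𝓞 K)) (h : (2 : 𝓞 K) ∉ v.asIdeal) :
    v.intValuation (2 : 𝓞 K) = 1 := by
  refine le_antisymm (v.intValuation_le_one _) (not_lt.mp ?_)
  rw [intValuation_lt_one_iff_dvd, Ideal.dvd_span_singleton]
  exact h

end Helpers

section Dyadic
open IsDedekindDomain.HeightOneSpectrum NumberField.InfinitePlace Module Module.Free

lemma dyadic_dense_places (K : Type*) [Field K] [NumberField K]
    (target : ∀ w : InfinitePlace K, w.Completion) {δ : ℝ} (hδ : 0 < δ) :
    ∃ (m : 𝓞 K) (n : ℕ), ∀ w : InfinitePlace K,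
      dist (algebraMap K w.Completion (algebraMap (𝓞 K) K m / 2 ^ n)) (target w) < δ := by
  classical
  set t : mixedEmbedding.mixedSpace K :=
    (fun wr => Completion.extensionEmbeddingOfIsReal wr.2 (target wr.1),
     fun wc => Completion.extensionEmbedding wc.1 (target wc.1)) with ht
  set B := mixedEmbedding.latticeBasis K with hB
  set C : ℝ := ∑ i, ‖B i‖ with hC
  have hC0 : 0 ≤ C := Finset.sum_nonneg fun i _ => norm_nonneg _
  obtain ⟨n, hn⟩ := pow_unbounded_of_one_lt ((C + 1) / δ) (one_lt_two (α := ℝ))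
  have hn' : C + 1 < 2 ^ n * δ := by rwa [div_lt_iff₀ hδ] at hn
  set c : Free.ChooseBasisIndex ℤ (𝓞 K) → ℝ := fun i => B.repr ((2 ^ n : ℝ) • t) i with hc
  set m : 𝓞 K := ∑ i, round (c i) • RingOfIntegers.basis K i with hm
  have hmap : mixedEmbedding K (algebraMap (𝓞 K) K m) = ∑ i, ((round (c i) : ℝ)) • B i := by
    rw [hm, map_sum, map_sum]
    refine Finset.sum_congr rfl fun i _ => ?_
    rw [map_zsmul, map_zsmul, Int.cast_smul_eq_zsmul]
    congr 1
    rw [hB, mixedEmbedding.latticeBasis_apply, integralBasis_apply]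
  have key : ‖mixedEmbedding K (algebraMap (𝓞 K) K m) - (2 ^ n : ℝ) • t‖ < 2 ^ n * δ := by
    rw [hmap]
    have hrepr : (2 ^ n : ℝ) • t = ∑ i, c i • B i := (B.sum_repr _).symm
    nth_rewrite 1 [hrepr]
    rw [← Finset.sum_sub_distrib]
    simp_rw [← sub_smul]
    calc ‖∑ i, ((round (c i) : ℝ) - c i) • B i‖
        ≤ ∑ i, ‖((round (c i) : ℝ) - c i) • B i‖ := norm_sum_le _ _
      _ ≤ ∑ i, ‖B i‖ := by
          refine Finset.sum_le_sum fun i _ => ?_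
          rw [norm_smul]
          have h1 : ‖(round (c i) : ℝ) - c i‖ ≤ 1 := by
            rw [Real.norm_eq_abs, abs_sub_comm]
            exact (abs_sub_round (c i)).trans (by norm_num)
          calc ‖(round (c i) : ℝ) - c i‖ * ‖B i‖ ≤ 1 * ‖B i‖ :=
                mul_le_mul_of_nonneg_right h1 (norm_nonneg _)
            _ = ‖B i‖ := one_mul _
      _ < 2 ^ n * δ := lt_of_le_of_lt (by linarith) hn'
  refine ⟨m, n, fun w => ?_⟩
  have h2n : (0:ℝ) < 2 ^ n := by positivity
  by_cases hw : IsReal w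
  · rw [← (Completion.isometry_extensionEmbeddingOfIsReal hw).dist_eq]
    have e1 : Completion.extensionEmbeddingOfIsReal hw
        (algebraMap K w.Completion (algebraMap (𝓞 K) K m / 2 ^ n)) =
        embedding_of_isReal hw (algebraMap (𝓞 K) K m / 2 ^ n) :=
      Completion.extensionEmbeddingOfIsReal_coe hw _
    rw [e1, Real.dist_eq]
    have e2 : embedding_of_isReal hw (algebraMap (𝓞 K) K m / 2 ^ n)
        = embedding_of_isReal hw (algebraMap (𝓞 K) K m) / 2 ^ n := by
      rw [map_div₀, map_pow, map_ofNat]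
    have e3 : embedding_of_isReal hw (algebraMap (𝓞 K) K m)
        = (mixedEmbedding K (algebraMap (𝓞 K) K m)).1 ⟨w, hw⟩ :=
      (mixedEmbedding.mixedEmbedding_apply_isReal K _ ⟨w, hw⟩).symm
    have e4 : Completion.extensionEmbeddingOfIsReal hw (target w) = t.1 ⟨w, hw⟩ := rfl
    rw [e2, e3, e4]
    set A := (mixedEmbedding K (algebraMap (𝓞 K) K m)).1 ⟨w, hw⟩
    set T := t.1 ⟨w, hw⟩
    have comp : |A - 2 ^ n * T| < 2 ^ n * δ := by
      have h5 : A - 2 ^ n * T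
          = ((mixedEmbedding K (algebraMap (𝓞 K) K m) - (2 ^ n : ℝ) • t).1) ⟨w, hw⟩ := by
        simp [A, T, Prod.smul_fst, Pi.smul_apply, smul_eq_mul]
      rw [h5, ← Real.norm_eq_abs]
      exact lt_of_le_of_lt ((norm_le_pi_norm _ _).trans (norm_fst_le _)) key
    have h6 : A / 2 ^ n - T = (A - 2 ^ n * T) / 2 ^ n := by field_simp
    rw [h6, abs_div, abs_of_pos h2n, div_lt_iff₀ h2n]
    linarith [comp]
  · have hw' : IsComplex w := not_isReal_iff_isComplex.mp hw
    rw [← (Completion.isometry_extensionEmbedding w).dist_eq]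
    have e1 : Completion.extensionEmbedding w
        (algebraMap K w.Completion (algebraMap (𝓞 K) K m / 2 ^ n)) =
        w.embedding (algebraMap (𝓞 K) K m / 2 ^ n) :=
      Completion.extensionEmbedding_coe w _
    rw [e1, dist_eq_norm]
    have e2 : w.embedding (algebraMap (𝓞 K) K m / 2 ^ n)
        = w.embedding (algebraMap (𝓞 K) K m) / 2 ^ n := by
      rw [map_div₀, map_pow, map_ofNat]
    have e3 : w.embedding (algebraMap (𝓞 K) K m)
        = (mixedEmbedding K (algebraMap (𝓞 K) K m)).2 ⟨w, hw'⟩ :=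
      (mixedEmbedding.mixedEmbedding_apply_isComplex K _ ⟨w, hw'⟩).symm
    have e4 : Completion.extensionEmbedding w (target w) = t.2 ⟨w, hw'⟩ := rfl
    rw [e2, e3, e4]
    set A := (mixedEmbedding K (algebraMap (𝓞 K) K m)).2 ⟨w, hw'⟩
    set T := t.2 ⟨w, hw'⟩
    have comp : ‖A - (2 ^ n : ℂ) * T‖ < 2 ^ n * δ := by
      have h5 : A - (2 ^ n : ℂ) * T
          = ((mixedEmbedding K (algebraMap (𝓞 K) K m) - (2 ^ n : ℝ) • t).2) ⟨w, hw'⟩ := by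
        simp [A, T, Prod.smul_snd, Pi.smul_apply, Complex.real_smul]
      rw [h5]
      exact lt_of_le_of_lt ((norm_le_pi_norm _ _).trans (norm_snd_le _)) key
    have h2nC : ((2 : ℂ) ^ n) ≠ 0 := by norm_num
    have h6 : A / 2 ^ n - T = (A - 2 ^ n * T) / 2 ^ n := by field_simp
    rw [h6, norm_div]
    have h7 : ‖(2 : ℂ) ^ n‖ = (2 : ℝ) ^ n := by
      rw [norm_pow, Complex.norm_ofNat]
    rw [h7, div_lt_iff₀ h2n]
    linarith [comp]

end Dyadic

set_option maxHeartbeats 1000000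
set_option synthInstance.maxHeartbeats 1000000

open IsDedekindDomain.HeightOneSpectrum

/-- (Strong approximation off the 2-adic places.) Let `K` be a number field and
`T` a finite set of places of `K` containing no 2-adic place; `T` is encoded as a finite set
`Tinf` of infinite places together with a finite set `Tfin` of finite places none of which
lies above `2`. Then for every family of targets `xinf w ∈ K_w` (`w ∈ Tinf`),
`xfin v ∈ K_v` (`v ∈ Tfin`), and every `ε > 0` (for archimedean places) and every nonzero
`γ ∈ WithZero (Multiplicative ℤ)` (the "`ε`" for nonarchimedean places, measured by the valuation), there is `ξ ∈ K`
with `|ξ - xinf w|_w < ε` for all `w ∈ Tinf`, `|ξ - xfin v|_v < γ` for all `v ∈ Tfin`, and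
`ξ ∈ O_{K_v}` for every finite place `v ∉ Tfin` whose residue characteristic is not `2`.
(Equivalently: `K` is dense in the ring of adèles of `K` with the 2-adic components
removed.) -/
theorem denseRange_in_adeles_off_two_adic_places
    (K : Type*) [Field K] [NumberField K]
    (Tinf : Finset (InfinitePlace K)) (Tfin : Finset (HeightOneSpectrum (𝓞 K)))
    (hT : ∀ v ∈ Tfin, (2 : 𝓞 K) ∉ v.asIdeal)
    (xinf : (w : InfinitePlace K) → w.Completion)
    (xfin : (v : HeightOneSpectrum (𝓞 K)) → v.adicCompletion K)
    (ε : ℝ) (hε : 0 < ε) (γ : WithZero (Multiplicative ℤ)) (hγ : γ ≠ 0) :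
    ∃ ξ : K,
      (∀ w ∈ Tinf, dist (algebraMap K w.Completion ξ) (xinf w) < ε) ∧
      (∀ v ∈ Tfin, Valued.v ((ξ : v.adicCompletion K) - xfin v) < γ) ∧
      (∀ v : HeightOneSpectrum (𝓞 K), v ∉ Tfin → ringChar (𝓞 K ⧸ v.asIdeal) ≠ 2 →
        (ξ : v.adicCompletion K) ∈ v.adicCompletionIntegers K) := by
  classical
  have hy' : ∀ v : HeightOneSpectrum (𝓞 K), ∃ yv : K,
      Valued.v ((yv : v.adicCompletion K) - xfin v) < γ := fun v => adic_dense v (xfin v) hγ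
  choose y hy using hy'
  obtain ⟨d, hd⟩ := IsLocalization.exist_integer_multiples (nonZeroDivisors (𝓞 K)) Tfin y
  have hr' : ∀ v : HeightOneSpectrum (𝓞 K), ∃ rv : 𝓞 K,
      v ∈ Tfin → algebraMap (𝓞 K) K rv = (d : 𝓞 K) • y v := by
    intro v
    by_cases hv : v ∈ Tfin
    · obtain ⟨rv, hrv⟩ := hd v hv
      exact ⟨rv, fun _ => hrv⟩
    · exact ⟨0, fun h => absurd h hv⟩
  choose r hr using hr'
  have hd0 : (d : 𝓞 K) ≠ 0 := nonZeroDivisors.coe_ne_zero d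
  have hspan : Ideal.span {(d : 𝓞 K)} ≠ 0 := by
    rw [Ideal.zero_eq_bot, Ne, Ideal.span_singleton_eq_bot]
    exact hd0
  set D : Finset (HeightOneSpectrum (𝓞 K)) :=
    (Ideal.finite_factors hspan).toFinset.filter (fun w => w ∉ Tfin) with hD
  set E := Tfin ∪ D with hE
  have hcu : ∀ u : HeightOneSpectrum (𝓞 K), ∃ N0 : ℕ, ∀ M : ℕ, N0 ≤ M →
      (↑(Multiplicative.ofAdd (-(M:ℤ))) : WithZero (Multiplicative ℤ)) <
        (if u ∈ Tfin then γ else 1) * u.intValuation (d : 𝓞 K) := by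
    intro u
    refine zm0_lt_of_ne_zero _ (mul_ne_zero ?_ ?_)
    · split <;> simp [hγ]
    · exact intValuation_ne_zero u _ hd0
  choose N0 hN0 using hcu
  set N := E.sup N0 with hN
  have hNlt : ∀ u ∈ E, (↑(Multiplicative.ofAdd (-(N:ℤ))) : WithZero (Multiplicative ℤ)) <
      (if u ∈ Tfin then γ else 1) * u.intValuation (d : 𝓞 K) :=
    fun u hu => hN0 u N (Finset.le_sup hu)
  obtain ⟨b, hb⟩ := IsDedekindDomain.exists_forall_sub_mem_ideal (s := E)
    (fun u => u.asIdeal) (fun _ => N) (fun u _ => u.prime)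
    (fun i _ j _ hij heq => hij (HeightOneSpectrum.ext heq))
    (fun u => if u.1 ∈ Tfin then r u.1 else 0)
  choose tEl htmem htne using fun u : HeightOneSpectrum (𝓞 K) =>
    Submodule.exists_mem_ne_zero_of_ne_bot u.ne_bot
  set a : 𝓞 K := ∏ u ∈ E, tEl u ^ N with ha
  have ha0 : a ≠ 0 := Finset.prod_ne_zero_iff.mpr fun u _ => pow_ne_zero _ (htne u)
  have haI : ∀ u ∈ E, a ∈ u.asIdeal ^ N := by
    intro u hu
    rw [ha, ← Finset.mul_prod_erase E _ hu]
    exact Ideal.mul_mem_right _ _ (Ideal.pow_mem_pow (htmem u) N)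
  have hval : ∀ (u : HeightOneSpectrum (𝓞 K)) (z : 𝓞 K), z ∈ u.asIdeal ^ N →
      u.intValuation z ≤ (↑(Multiplicative.ofAdd (-(N:ℤ))) : WithZero (Multiplicative ℤ)) := by
    intro u z hz
    exact (intValuation_le_pow_iff_dvd u z N).mpr (Ideal.dvd_span_singleton.mpr hz)
  set dK : K := algebraMap (𝓞 K) K (d : 𝓞 K) with hdK
  have hdK0 : dK ≠ 0 := fun h => hd0 ((map_eq_zero_iff _ (IsFractionRing.injective (𝓞 K) K)).mp h)
  set cq : K := algebraMap (𝓞 K) K a / dK with hcq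
  set zq : K := algebraMap (𝓞 K) K b / dK with hzq
  have hcq0 : cq ≠ 0 := div_ne_zero
    (fun h => ha0 ((map_eq_zero_iff _ (IsFractionRing.injective (𝓞 K) K)).mp h)) hdK0
  set C : ℝ := 1 + ∑ w : InfinitePlace K, ‖algebraMap K w.Completion cq‖ with hC
  have hC1 : 1 ≤ C := le_add_of_nonneg_right (Finset.sum_nonneg fun _ _ => norm_nonneg _)
  have hδpos : 0 < ε / C := div_pos hε (lt_of_lt_of_le one_pos hC1)
  obtain ⟨m, n, hmn⟩ := dyadic_dense_places K
    (fun w => (xinf w - algebraMap K w.Completion zq) / algebraMap K w.Completion cq) hδpos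
  set ξ : K := zq + cq * (algebraMap (𝓞 K) K m / 2 ^ n) with hξ
  have hdVne : ∀ w : HeightOneSpectrum (𝓞 K), w.intValuation (d : 𝓞 K) ≠ 0 :=
    fun w => intValuation_ne_zero w _ hd0
  have hterm1 : ∀ (w : HeightOneSpectrum (𝓞 K)) (x : 𝓞 K),
      w.valuation K (algebraMap (𝓞 K) K x / dK)
        = w.intValuation x * (w.intValuation (d : 𝓞 K))⁻¹ := by
    intro w x
    rw [map_div₀, hdK, valuation_of_algebraMap, valuation_of_algebraMap, div_eq_mul_inv]
  have hterm2 : ∀ w : HeightOneSpectrum (𝓞 K), (2 : 𝓞 K) ∉ w.asIdeal →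
      w.valuation K (cq * (algebraMap (𝓞 K) K m / 2 ^ n))
        = (w.intValuation a * w.intValuation m) * (w.intValuation (d : 𝓞 K))⁻¹ := by
    intro w h2
    have h2v : w.valuation K ((2 : K)) = 1 := by
      rw [show ((2 : K)) = algebraMap (𝓞 K) K 2 from (map_ofNat _ 2).symm,
        valuation_of_algebraMap]
      exact intValuation_two_eq_one w h2
    rw [map_mul, hcq, map_div₀, map_div₀, map_pow, h2v, one_pow, hdK,
      valuation_of_algebraMap, valuation_of_algebraMap, valuation_of_algebraMap,
      div_one, div_eq_mul_inv, mul_right_comm]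
  have hvalm : ∀ w : HeightOneSpectrum (𝓞 K), w.intValuation m ≤ 1 :=
    fun w => intValuation_le_one w m
  refine ⟨ξ, ?_, ?_, ?_⟩
  · -- archimedean places
    intro w _
    have hcKne : algebraMap K w.Completion cq ≠ 0 := by
      intro h
      exact hcq0 ((algebraMap K w.Completion).injective (by rw [h, map_zero]))
    have hCqpos : 0 < ‖algebraMap K w.Completion cq‖ := norm_pos_iff.mpr hcKne
    have h1 := hmn w
    have hsplit : algebraMap K w.Completion ξ
        = algebraMap K w.Completion zq + algebraMap K w.Completion cq
            * algebraMap K w.Completion (algebraMap (𝓞 K) K m / 2 ^ n) := by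
      rw [hξ, map_add, map_mul]
    have heq : algebraMap K w.Completion ξ - xinf w
        = algebraMap K w.Completion cq
            * (algebraMap K w.Completion (algebraMap (𝓞 K) K m / 2 ^ n)
              - (xinf w - algebraMap K w.Completion zq) / algebraMap K w.Completion cq) := by
      rw [hsplit, mul_sub, mul_div_cancel₀ _ hcKne]
      ring
    have hnorm_le : ‖algebraMap K w.Completion cq‖ ≤ C - 1 := by
      have hs : ‖algebraMap K w.Completion cq‖
          ≤ ∑ w' : InfinitePlace K, ‖algebraMap K w'.Completion cq‖ :=
        Finset.single_le_sum (f := fun w' : InfinitePlace K => ‖algebraMap K w'.Completion cq‖)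
          (fun _ _ => norm_nonneg _) (Finset.mem_univ w)
      rw [hC]; linarith
    calc dist (algebraMap K w.Completion ξ) (xinf w)
        = ‖algebraMap K w.Completion cq‖
            * dist (algebraMap K w.Completion (algebraMap (𝓞 K) K m / 2 ^ n))
                ((xinf w - algebraMap K w.Completion zq) / algebraMap K w.Completion cq) := by
          rw [dist_eq_norm, heq, norm_mul, dist_eq_norm]
      _ < ‖algebraMap K w.Completion cq‖ * (ε / C) := by
          exact mul_lt_mul_of_pos_left h1 hCqpos
      _ ≤ C * (ε / C) := by
          have : ‖algebraMap K w.Completion cq‖ ≤ C := by linarith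
          exact mul_le_mul_of_nonneg_right this (le_of_lt hδpos)
      _ = ε := by
          field_simp
  · -- places in Tfin
    intro v hv
    have hvE : v ∈ E := Finset.mem_union_left _ hv
    have hbv : b - r v ∈ v.asIdeal ^ N := by simpa [hv] using hb v hvE
    have hNv : (↑(Multiplicative.ofAdd (-(N:ℤ))) : WithZero (Multiplicative ℤ)) < γ * v.intValuation (d : 𝓞 K) := by
      simpa [hv] using hNlt v hvE
    have hyv : y v = algebraMap (𝓞 K) K (r v) / dK := by
      rw [eq_div_iff hdK0, hr v hv, Algebra.smul_def, hdK, mul_comm]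
    have hxi : ξ - y v
        = algebraMap (𝓞 K) K (b - r v) / dK + cq * (algebraMap (𝓞 K) K m / 2 ^ n) := by
      rw [hξ, hyv, hzq, map_sub]
      ring
    have key1 : v.valuation K (ξ - y v) < γ := by
      rw [hxi]
      refine lt_of_le_of_lt (Valuation.map_add _ _ _) (max_lt ?_ ?_)
      · rw [hterm1]
        exact zm0_bound (hdVne v) (hval v _ hbv) hNv
      · rw [hterm2 v (hT v hv)]
        refine zm0_bound (hdVne v) ?_ hNv
        calc v.intValuation a * v.intValuation m
            ≤ (↑(Multiplicative.ofAdd (-(N:ℤ))) : WithZero (Multiplicative ℤ)) * 1 :=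
              mul_le_mul' (hval v a (haI v hvE)) (hvalm v)
          _ = _ := mul_one _
    letI : UniformSpace K := v.adicValued.toUniformSpace
    have hsplit2 : ((ξ : v.adicCompletion K) - xfin v)
        = (((ξ - y v : K)) : v.adicCompletion K) + ((y v : v.adicCompletion K) - xfin v) := by
      rw [show (((ξ - y v : K)) : v.adicCompletion K) = (ξ : v.adicCompletion K) - (y v : v.adicCompletion K)
        from map_sub (algebraMap K (v.adicCompletion K)) ξ (y v)]
      ring
    rw [hsplit2]
    refine lt_of_le_of_lt (Valuation.map_add _ _ _) (max_lt ?_ (hy v))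
    rw [valuedAdicCompletion_eq_valuation']
    exact key1
  · -- integrality off Tfin away from 2
    intro w hw hchar
    have h2 := two_not_mem_of_ringChar_ne_two w hchar
    rw [mem_adicCompletionIntegers, valuedAdicCompletion_eq_valuation']
    have hξd : ξ = algebraMap (𝓞 K) K b / dK + cq * (algebraMap (𝓞 K) K m / 2 ^ n) := by
      rw [hξ, hzq]
    rw [hξd]
    refine le_trans (Valuation.map_add _ _ _) (max_le ?_ ?_)
    · rw [hterm1]
      by_cases hwD : w ∈ D
      · have hwE : w ∈ E := Finset.mem_union_right _ hwD
        have hbw : b ∈ w.asIdeal ^ N := by simpa [hw] using hb w hwE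
        have hNd : (↑(Multiplicative.ofAdd (-(N:ℤ))) : WithZero (Multiplicative ℤ))
            < 1 * w.intValuation (d : 𝓞 K) := by simpa [hw] using hNlt w hwE
        exact le_of_lt (zm0_bound (hdVne w) (hval w b hbw) hNd)
      · have hwd1 : w.intValuation (d : 𝓞 K) = 1 := by
          refine le_antisymm (intValuation_le_one w _) (not_lt.mp ?_)
          rw [intValuation_lt_one_iff_dvd]
          intro hdvd
          exact hwD (by
            rw [hD, Finset.mem_filter, Set.Finite.mem_toFinset]
            exact ⟨hdvd, hw⟩)
        rw [hwd1, inv_one, mul_one]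
        exact intValuation_le_one w b
    · rw [hterm2 w h2]
      by_cases hwD : w ∈ D
      · have hwE : w ∈ E := Finset.mem_union_right _ hwD
        have hNd : (↑(Multiplicative.ofAdd (-(N:ℤ))) : WithZero (Multiplicative ℤ))
            < 1 * w.intValuation (d : 𝓞 K) := by simpa [hw] using hNlt w hwE
        refine le_of_lt (zm0_bound (hdVne w) ?_ hNd)
        calc w.intValuation a * w.intValuation m
            ≤ (↑(Multiplicative.ofAdd (-(N:ℤ))) : WithZero (Multiplicative ℤ)) * 1 :=
              mul_le_mul' (hval w a (haI w hwE)) (hvalm w)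
          _ = _ := mul_one _
      · have hwd1 : w.intValuation (d : 𝓞 K) = 1 := by
          refine le_antisymm (intValuation_le_one w _) (not_lt.mp ?_)
          rw [intValuation_lt_one_iff_dvd]
          intro hdvd
          exact hwD (by
            rw [hD, Finset.mem_filter, Set.Finite.mem_toFinset]
            exact ⟨hdvd, hw⟩)
        rw [hwd1, inv_one, mul_one]
        calc w.intValuation a * w.intValuation m ≤ 1 * 1 :=
              mul_le_mul' (intValuation_le_one w a) (hvalm w)
          _ = 1 := mul_one _
end

section
/- Let v be a finite place of a number field K and let a ∈ K_v^× with v(a) odd. Then the set {x ∈ O_{K_v}^× : (a,x)_v = −1} is a nonempty open subset of K_v; in particular, there exists a unit x ∈ O_{K_v}^× such that x₀² − a x₁² − x x₂² = 0 has no nontrivial solution in K_v³. -/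
open IsDedekindDomain IsDedekindDomain.HeightOneSpectrum NumberField

/-- The normalized additive valuation at a finite place `v` of a number field `K`, defined on
the completion `K_v`, with the convention `v(0) = ⊤`; a uniformizer has valuation `1`. -/
noncomputable def adicAddVal {K : Type*} [Field K] [NumberField K]
    (v : HeightOneSpectrum (𝓞 K)) (x : v.adicCompletion K) : WithTop ℤ :=
  haveI := Classical.dec (x = 0)
  if h : x = 0 then ⊤
  else ((- Multiplicative.toAdd (WithZero.unzero ((Valued.v).ne_zero_iff.mpr h)) : ℤ) : WithTop ℤ)

/-- A finite place `v` of a number field is *odd* if its residue characteristic is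
different from 2. -/
def IsOddPlace {K : Type*} [Field K] [NumberField K] (v : HeightOneSpectrum (𝓞 K)) : Prop :=
  ringChar (𝓞 K ⧸ v.asIdeal) ≠ 2

/-- `HilbertSolvable v a b` says that the Hilbert symbol `(a,b)_v` equals `1`, i.e. the equation
`x₀² - a x₁² - b x₂² = 0` has a solution `(x₀,x₁,x₂) ≠ (0,0,0)` in `K_v³`.
The Hilbert symbol `(a,b)_v` equals `-1` exactly when this fails. -/
def HilbertSolvable {K : Type*} [Field K] [NumberField K] (v : HeightOneSpectrum (𝓞 K))
    (a b : v.adicCompletion K) : Prop :=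
  ∃ x₀ x₁ x₂ : v.adicCompletion K, (x₀, x₁, x₂) ≠ (0, 0, 0) ∧ x₀ ^ 2 - a * x₁ ^ 2 - b * x₂ ^ 2 = 0

open Multiplicative Filter
open scoped WithZero

set_option synthInstance.maxHeartbeats 400000
set_option maxHeartbeats 1600000

section Aux

variable {K : Type*} [Field K] [NumberField K] (v : HeightOneSpectrum (𝓞 K))

/-- Any `v`-integral element of `K` is congruent to a global integer mod the maximal ideal. -/
lemma exists_approx_int (x : K) (hx : v.valuation K x ≤ 1) :
    ∃ r : 𝓞 K, v.valuation K (x - algebraMap (𝓞 K) K r) < 1 := by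
  by_cases hx0 : x = 0
  · exact ⟨0, by simp [hx0, zero_lt_one]⟩
  obtain ⟨⟨p, s⟩, hmk⟩ := IsLocalization.mk'_surjective (nonZeroDivisors (𝓞 K)) x
  dsimp only at hmk
  set q : 𝓞 K := (s : 𝓞 K) with hqdef
  have hq0 : q ≠ 0 := nonZeroDivisors.coe_ne_zero s
  have hvq0 : v.intValuation q ≠ 0 := v.intValuation_ne_zero q hq0
  -- write the valuation of q as ofAdd (-n)
  obtain ⟨b, hb⟩ := WithZero.ne_zero_iff_exists.mp hvq0
  have hble : (b : ℤᵐ⁰) ≤ 1 := hb.le.trans (v.intValuation_le_one q)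
  have hbneg : toAdd b ≤ 0 := by
    rwa [← WithZero.coe_one, WithZero.coe_le_coe, ← toAdd_le, toAdd_one] at hble
  set n : ℕ := (-toAdd b).toNat with hndef
  have hqn : v.intValuation q = ofAdd (-(n : ℤ)) := by
    rw [← hb, hndef]
    congr 1
    rw [Int.toNat_of_nonneg (by omega), neg_neg]
    exact (ofAdd_toAdd b).symm
  -- p is divisible by v^n as well
  have hxq : v.valuation K x * v.intValuation q = v.intValuation p := by
    rw [← hmk, valuation_of_mk']
    exact div_mul_cancel₀ _ hvq0
  have hpn : v.intValuation p ≤ ofAdd (-(n : ℤ)) := by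
    rw [← hxq, ← hqn]
    calc v.valuation K x * v.intValuation q ≤ 1 * v.intValuation q :=
          mul_le_mul_left hx _
    _ = v.intValuation q := one_mul _
  have hdvd_q : v.asIdeal ^ n ∣ Ideal.span {q} :=
    (v.intValuation_le_pow_iff_dvd q n).mp (le_of_eq hqn)
  have hdvd_p : v.asIdeal ^ n ∣ Ideal.span {p} :=
    (v.intValuation_le_pow_iff_dvd p n).mp hpn
  have hnotdvd : ¬ v.asIdeal ^ (n + 1) ∣ Ideal.span {q} := by
    intro hcon
    have h5 : v.intValuation q ≤ (ofAdd (-((n+1 : ℕ) : ℤ)) : Multiplicative ℤ) :=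
      (v.intValuation_le_pow_iff_dvd q (n + 1)).mpr hcon
    rw [hqn, WithZero.coe_le_coe, ofAdd_le] at h5
    simp only [neg_le_neg_iff, Int.ofNat_le] at h5
    omega
  obtain ⟨I, hI⟩ := hdvd_q
  have hInotle : ¬ I ≤ v.asIdeal := by
    intro hle
    exact hnotdvd (by rw [hI, pow_succ]; exact mul_dvd_mul_left _ (Ideal.dvd_iff_le.mpr hle))
  obtain ⟨q', hq'I, hq'v⟩ := SetLike.not_le_iff_exists.mp hInotle
  have hkey : Ideal.span {q} ∣ Ideal.span {q' * p} := by
    rw [hI, ← Ideal.span_singleton_mul_span_singleton]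
    exact mul_comm (Ideal.span {q'}) (Ideal.span {p}) ▸
      mul_dvd_mul hdvd_p (Ideal.dvd_iff_le.mpr ((Ideal.span_le).mpr (by simpa using hq'I)))
  have hqdvd : q ∣ q' * p := by
    have := Ideal.dvd_iff_le.mp hkey
    exact Ideal.span_singleton_le_span_singleton.mp this
  obtain ⟨e, he⟩ := hqdvd
  -- In K : q' * x = e
  have hxK : algebraMap (𝓞 K) K q' * x = algebraMap (𝓞 K) K e := by
    have hspec : x * algebraMap (𝓞 K) K q = algebraMap (𝓞 K) K p := by
      rw [← hmk]; exact IsLocalization.mk'_spec K p s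
    have hqK : algebraMap (𝓞 K) K q ≠ 0 := by
      simpa using hq0
    refine mul_right_cancel₀ hqK ?_
    calc algebraMap (𝓞 K) K q' * x * algebraMap (𝓞 K) K q
        = algebraMap (𝓞 K) K q' * (x * algebraMap (𝓞 K) K q) := by ring
    _ = algebraMap (𝓞 K) K q' * algebraMap (𝓞 K) K p := by rw [hspec]
    _ = algebraMap (𝓞 K) K (q' * p) := by rw [map_mul]
    _ = algebraMap (𝓞 K) K (q * e) := by rw [he]
    _ = algebraMap (𝓞 K) K e * algebraMap (𝓞 K) K q := by rw [map_mul, mul_comm]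
  -- invert q' modulo v.asIdeal
  have hfield : IsField (𝓞 K ⧸ v.asIdeal) := by
    rw [← Ideal.Quotient.maximal_ideal_iff_isField_quotient]
    infer_instance
  have hq'bar : (Ideal.Quotient.mk v.asIdeal q') ≠ 0 := by
    rw [Ne, Ideal.Quotient.eq_zero_iff_mem]; exact hq'v
  obtain ⟨sbar, hsbar⟩ := hfield.mul_inv_cancel hq'bar
  obtain ⟨s', rfl⟩ := Ideal.Quotient.mk_surjective sbar
  have hmem : q' * s' - 1 ∈ v.asIdeal := by
    rw [← Ideal.Quotient.eq_zero_iff_mem, map_sub, map_mul, hsbar, map_one, sub_self]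
  refine ⟨e * s', ?_⟩
  have hxr : x - algebraMap (𝓞 K) K (e * s') = x * (1 - algebraMap (𝓞 K) K (q' * s')) := by
    rw [map_mul, map_mul, mul_sub, mul_one, ← mul_assoc, mul_comm x _, hxK]
  rw [hxr, map_mul]
  have hlt : v.valuation K (1 - algebraMap (𝓞 K) K (q' * s')) < 1 := by
    have : (1 : K) - algebraMap (𝓞 K) K (q' * s') = algebraMap (𝓞 K) K (1 - q' * s') := by
      rw [map_sub, map_one]
    rw [this, valuation_lt_one_iff_dvd, Ideal.dvd_span_singleton]
    simpa using v.asIdeal.neg_mem hmem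
  calc v.valuation K x * v.valuation K (1 - algebraMap (𝓞 K) K (q' * s'))
      ≤ 1 * v.valuation K (1 - algebraMap (𝓞 K) K (q' * s')) := mul_le_mul_left hx _
  _ < 1 := by rwa [one_mul]

/-- Coercion of a global integer into the completion. -/
noncomputable def intCoe (r : 𝓞 K) : v.adicCompletion K :=
  algebraMap K (v.adicCompletion K) (algebraMap (𝓞 K) K r)

lemma intCoe_add (r s : 𝓞 K) : intCoe v (r + s) = intCoe v r + intCoe v s := by
  simp [intCoe, map_add]

lemma intCoe_mul (r s : 𝓞 K) : intCoe v (r * s) = intCoe v r * intCoe v s := by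
  simp [intCoe, map_mul]

lemma intCoe_sub (r s : 𝓞 K) : intCoe v (r - s) = intCoe v r - intCoe v s := by
  simp [intCoe, map_sub]

lemma intCoe_one : intCoe v 1 = 1 := by simp [intCoe, map_one]

lemma val_intCoe (r : 𝓞 K) :
    Valued.v (intCoe v r) = v.valuation K (algebraMap (𝓞 K) K r) :=
  valuedAdicCompletion_eq_valuation' v _

lemma val_intCoe_le_one (r : 𝓞 K) : Valued.v (intCoe v r) ≤ 1 := by
  rw [val_intCoe]; exact v.valuation_le_one r

lemma val_intCoe_lt_one_iff (r : 𝓞 K) :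
    Valued.v (intCoe v r) < 1 ↔ r ∈ v.asIdeal := by
  rw [val_intCoe, valuation_lt_one_iff_dvd, Ideal.dvd_span_singleton]

lemma val_intCoe_eq_one_iff (r : 𝓞 K) :
    Valued.v (intCoe v r) = 1 ↔ r ∉ v.asIdeal := by
  constructor
  · intro h hmem
    have := (val_intCoe_lt_one_iff v r).mpr hmem
    rw [h] at this
    exact lt_irrefl _ this
  · intro h
    rcases lt_or_eq_of_le (val_intCoe_le_one v r) with hlt | heq
    · exact absurd ((val_intCoe_lt_one_iff v r).mp hlt) h
    · exact heq

/-- Any integral element of the completion is congruent to a global integer mod the maximal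
ideal. -/
lemma exists_approx_completion (u : v.adicCompletion K) (hu : Valued.v u ≤ 1) :
    ∃ r : 𝓞 K, Valued.v (u - intCoe v r) < 1 := by
  letI : Valued K ℤᵐ⁰ := v.adicValued
  have hd : DenseRange (algebraMap K (v.adicCompletion K)) :=
    v.denseRange_algebraMap K
  have hball : {y : v.adicCompletion K | Valued.v (y - u) < 1} ∈ nhds u := by
    rw [Valued.mem_nhds]
    exact ⟨1, by simp⟩
  obtain ⟨x, hxball⟩ := hd.mem_nhds hball
  have hxu : Valued.v (algebraMap K (v.adicCompletion K) x - u) < 1 := hxball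
  have hvx : Valued.v (algebraMap K (v.adicCompletion K) x) ≤ 1 := by
    have : algebraMap K (v.adicCompletion K) x = (algebraMap K (v.adicCompletion K) x - u) + u :=
      by ring
    rw [this]
    exact le_trans (Valuation.map_add _ _ _) (max_le hxu.le hu)
  have hvxK : v.valuation K x ≤ 1 := by
    rwa [show Valued.v (algebraMap K (v.adicCompletion K) x) = v.valuation K x from
      valuedAdicCompletion_eq_valuation' v x] at hvx
  obtain ⟨r, hr⟩ := exists_approx_int v x hvxK
  refine ⟨r, ?_⟩
  have heq : u - algebraMap K (v.adicCompletion K) (algebraMap (𝓞 K) K r)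
      = (u - algebraMap K (v.adicCompletion K) x)
        + algebraMap K (v.adicCompletion K) (x - algebraMap (𝓞 K) K r) := by
    rw [map_sub]; ring
  rw [show intCoe v r = algebraMap K (v.adicCompletion K) (algebraMap (𝓞 K) K r) from rfl, heq]
  refine lt_of_le_of_lt (Valuation.map_add _ _ _) (max_lt ?_ ?_)
  · rwa [← Valuation.map_neg, neg_sub]
  · rw [show ((algebraMap K (v.adicCompletion K)) (x - algebraMap (𝓞 K) K r) : v.adicCompletion K)
        = ((x - algebraMap (𝓞 K) K r : K) : v.adicCompletion K) from rfl,
      valuedAdicCompletion_eq_valuation' v]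
    exact hr

/-- If `Δ₀` is not a square modulo `v`, then `u² - Δ₀` is a `v`-adic unit for every integral `u`. -/
lemma val_sub_sq_eq_one (Δ0 : 𝓞 K)
    (hns : ∀ rbar : 𝓞 K ⧸ v.asIdeal, rbar ^ 2 ≠ Ideal.Quotient.mk v.asIdeal Δ0)
    (u : v.adicCompletion K) (hu : Valued.v u ≤ 1) :
    Valued.v (u ^ 2 - intCoe v Δ0) = 1 := by
  obtain ⟨r, hr⟩ := exists_approx_completion v u hu
  have hvr : Valued.v (intCoe v r) ≤ 1 := val_intCoe_le_one v r
  have hbig : Valued.v (intCoe v (r ^ 2 - Δ0)) = 1 := by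
    rw [val_intCoe_eq_one_iff]
    intro hmem
    apply hns (Ideal.Quotient.mk v.asIdeal r)
    have := (Ideal.Quotient.eq_zero_iff_mem).mpr hmem
    rw [map_sub, map_pow, sub_eq_zero] at this
    exact this
  have hu2 : Valued.v (u + intCoe v r) ≤ 1 :=
    le_trans (Valuation.map_add _ _ _) (max_le hu hvr)
  have hsmall : Valued.v (u ^ 2 - intCoe v r ^ 2) < 1 := by
    have heq : u ^ 2 - intCoe v r ^ 2 = (u - intCoe v r) * (u + intCoe v r) := by ring
    rw [heq, Valuation.map_mul]
    calc Valued.v (u - intCoe v r) * Valued.v (u + intCoe v r)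
        ≤ Valued.v (u - intCoe v r) * 1 := mul_le_mul_right hu2 _
    _ = Valued.v (u - intCoe v r) := mul_one _
    _ < 1 := hr
  have heq2 : u ^ 2 - intCoe v Δ0 = (u ^ 2 - intCoe v r ^ 2) + intCoe v (r ^ 2 - Δ0) := by
    rw [intCoe_sub]
    have : intCoe v (r ^ 2) = intCoe v r ^ 2 := by
      rw [pow_two, pow_two, intCoe_mul]
    rw [this]; ring
  rw [heq2, Valuation.map_add_eq_of_lt_right _ (by rw [hbig]; exact hsmall), hbig]

/-- If `ρ₀` is not an Artin-Schreier value modulo `v`, then `s² + s - ρ₀` is a `v`-adic unit for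
every integral `s`. -/
lemma val_AS_eq_one (ρ0 : 𝓞 K)
    (hns : ∀ rbar : 𝓞 K ⧸ v.asIdeal, rbar ^ 2 + rbar ≠ Ideal.Quotient.mk v.asIdeal ρ0)
    (s : v.adicCompletion K) (hs : Valued.v s ≤ 1) :
    Valued.v (s ^ 2 + s - intCoe v ρ0) = 1 := by
  obtain ⟨r, hr⟩ := exists_approx_completion v s hs
  have hvr : Valued.v (intCoe v r) ≤ 1 := val_intCoe_le_one v r
  have hbig : Valued.v (intCoe v (r ^ 2 + r - ρ0)) = 1 := by
    rw [val_intCoe_eq_one_iff]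
    intro hmem
    apply hns (Ideal.Quotient.mk v.asIdeal r)
    have := (Ideal.Quotient.eq_zero_iff_mem).mpr hmem
    rw [map_sub, map_add, map_pow, sub_eq_zero] at this
    exact this
  have hu2 : Valued.v (s + intCoe v r) ≤ 1 :=
    le_trans (Valuation.map_add _ _ _) (max_le hs hvr)
  have hsmall : Valued.v ((s ^ 2 + s) - (intCoe v r ^ 2 + intCoe v r)) < 1 := by
    have heq : (s ^ 2 + s) - (intCoe v r ^ 2 + intCoe v r)
        = (s - intCoe v r) * (s + intCoe v r) + (s - intCoe v r) := by ring
    rw [heq]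
    refine lt_of_le_of_lt (Valuation.map_add _ _ _) (max_lt ?_ hr)
    rw [Valuation.map_mul]
    calc Valued.v (s - intCoe v r) * Valued.v (s + intCoe v r)
        ≤ Valued.v (s - intCoe v r) * 1 := mul_le_mul_right hu2 _
    _ = Valued.v (s - intCoe v r) := mul_one _
    _ < 1 := hr
  have heq2 : s ^ 2 + s - intCoe v ρ0
      = ((s ^ 2 + s) - (intCoe v r ^ 2 + intCoe v r)) + intCoe v (r ^ 2 + r - ρ0) := by
    rw [intCoe_sub, intCoe_add]
    have : intCoe v (r ^ 2) = intCoe v r ^ 2 := by rw [pow_two, pow_two, intCoe_mul]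
    rw [this]; ring
  rw [heq2, Valuation.map_add_eq_of_lt_right _ (by rw [hbig]; exact hsmall), hbig]

/-- In a finite field of characteristic two, the Artin-Schreier map is not surjective. -/
lemma exists_AS_nonvalue (F : Type*) [CommRing F] [Nontrivial F] [Finite F]
    (hF : ringChar F = 2) :
    ∃ c : F, ∀ s : F, s ^ 2 + s ≠ c := by
  haveI : CharP F 2 := hF ▸ ringChar.charP F
  have h2 : (1 : F) + 1 = 0 := by
    have := CharP.cast_eq_zero F 2
    rwa [show ((2 : ℕ) : F) = 1 + 1 by norm_num] at this
  by_contra hcon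
  push_neg at hcon
  have hsurj : Function.Surjective (fun s : F => s ^ 2 + s) := by
    intro c; obtain ⟨s, hs⟩ := hcon c; exact ⟨s, hs⟩
  have hinj : Function.Injective (fun s : F => s ^ 2 + s) :=
    Finite.injective_iff_surjective.mpr hsurj
  have : (1 : F) = 0 := hinj (by simp [one_pow, h2])
  exact one_ne_zero this

/-- There is `Δ ∈ K_v` of valuation one such that `u² - Δ` always has even valuation for
integral `u`. -/
lemma exists_good_delta : ∃ Δ : v.adicCompletion K, Valued.v Δ = 1 ∧
    ∀ u : v.adicCompletion K, Valued.v u ≤ 1 →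
      ∃ i : ℤ, Valued.v (u ^ 2 - Δ) = ((ofAdd (2 * i) : Multiplicative ℤ) : ℤᵐ⁰) := by
  haveI : Fintype (𝓞 K ⧸ v.asIdeal) := @Fintype.ofFinite _ (Ideal.finiteQuotientOfFreeOfNeBot v.asIdeal v.ne_bot)
  letI : Field (𝓞 K ⧸ v.asIdeal) := Ideal.Quotient.field v.asIdeal
  by_cases hchar : ringChar (𝓞 K ⧸ v.asIdeal) = 2
  · -- residue characteristic 2 : take Δ = 1 + 4ρ with ρ an Artin-Schreier non-value
    obtain ⟨c, hc⟩ := exists_AS_nonvalue (𝓞 K ⧸ v.asIdeal) hchar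
    obtain ⟨ρ0, hρ0⟩ := Ideal.Quotient.mk_surjective c
    have hns : ∀ rbar : 𝓞 K ⧸ v.asIdeal, rbar ^ 2 + rbar ≠ Ideal.Quotient.mk v.asIdeal ρ0 := by
      intro rbar; rw [hρ0]; exact hc rbar
    have hcne : c ≠ 0 := fun h => hc 0 (by simp [h])
    have hρnot : ρ0 ∉ v.asIdeal := by
      intro hmem
      exact hcne (by rw [← hρ0]; exact Ideal.Quotient.eq_zero_iff_mem.mpr hmem)
    have hVρ : Valued.v (intCoe v ρ0) = 1 := (val_intCoe_eq_one_iff v ρ0).mpr hρnot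
    -- 2 has positive valuation
    have h2mem : (2 : 𝓞 K) ∈ v.asIdeal := by
      rw [← Ideal.Quotient.eq_zero_iff_mem]
      haveI : CharP (𝓞 K ⧸ v.asIdeal) 2 := hchar ▸ ringChar.charP _
      rw [map_ofNat]
      exact CharP.cast_eq_zero _ 2
    have hι2 : intCoe v 2 = (2 : v.adicCompletion K) := by
      simp [intCoe, map_ofNat]
    have hV2lt : Valued.v (2 : v.adicCompletion K) < 1 := by
      rw [← hι2]; exact (val_intCoe_lt_one_iff v 2).mpr h2mem
    have hV2ne : Valued.v (2 : v.adicCompletion K) ≠ 0 := by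
      rw [← hι2, val_intCoe]
      rw [valuation_of_algebraMap]
      exact v.intValuation_ne_zero 2 two_ne_zero
    obtain ⟨β, hβ⟩ := WithZero.ne_zero_iff_exists.mp hV2ne
    have h2ne : (2 : v.adicCompletion K) ≠ 0 := (Valuation.ne_zero_iff Valued.v).mp hV2ne
    refine ⟨intCoe v 1 + intCoe v 2 * intCoe v 2 * intCoe v ρ0, ?_, ?_⟩
    · rw [intCoe_one]
      have hlt : Valued.v (intCoe v 2 * intCoe v 2 * intCoe v ρ0) < 1 := by
        rw [Valuation.map_mul, Valuation.map_mul, hVρ, mul_one, hι2]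
        calc Valued.v (2 : v.adicCompletion K) * Valued.v (2 : v.adicCompletion K)
            ≤ 1 * Valued.v (2 : v.adicCompletion K) := mul_le_mul_left hV2lt.le _
        _ = Valued.v (2 : v.adicCompletion K) := one_mul _
        _ < 1 := hV2lt
      rw [Valuation.map_add_eq_of_lt_left _ (by rw [Valuation.map_one]; exact hlt),
        Valuation.map_one]
    · intro u hu
      set Δ : v.adicCompletion K := intCoe v 1 + intCoe v 2 * intCoe v 2 * intCoe v ρ0 with hΔ
      set w : v.adicCompletion K := u - 1 with hw
      have huw : u = w + 1 := by rw [hw]; ring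
      have hkey : u ^ 2 - Δ = w * (w + 2) - 4 * intCoe v ρ0 := by
        rw [hΔ, intCoe_one, hι2, huw]; ring
      rcases lt_trichotomy (Valued.v w) (Valued.v (2 : v.adicCompletion K)) with hlt | heq | hgt
      · -- w much smaller than 2 : valuation of u² - Δ is that of 4ρ
        have hww2 : Valued.v (w * (w + 2)) < Valued.v (4 * intCoe v ρ0) := by
          have h4 : (4 : v.adicCompletion K) = 2 * 2 := by norm_num
          rw [Valuation.map_mul, Valuation.map_add_eq_of_lt_right _ hlt, h4,
            Valuation.map_mul, Valuation.map_mul, hVρ, mul_one]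
          rw [mul_comm (Valued.v w) (Valued.v (2 : v.adicCompletion K))]
          exact mul_lt_mul_of_pos_left hlt (zero_lt_iff.mpr hV2ne)
        rw [hkey, Valuation.map_sub_eq_of_lt_right _ hww2]
        refine ⟨toAdd β, ?_⟩
        have h4 : (4 : v.adicCompletion K) = 2 * 2 := by norm_num
        rw [h4, Valuation.map_mul, Valuation.map_mul, hVρ, mul_one, ← hβ, ← WithZero.coe_mul]
        congr 1
        rw [two_mul, ofAdd_add, ofAdd_toAdd]
      · -- w has the same valuation as 2 : write w = 2 s and use the Artin-Schreier lemma
        set s : v.adicCompletion K := w / 2 with hs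
        have hws : w = 2 * s := by rw [hs]; field_simp
        have hVs : Valued.v s = 1 := by
          rw [hs, Valuation.map_div]
          rw [heq]
          exact div_self (by rw [← heq] at hV2ne ⊢; exact hV2ne)
        have hkey2 : u ^ 2 - Δ = (2 * 2) * (s ^ 2 + s - intCoe v ρ0) := by
          rw [hkey, hws]; ring
        have hAS := val_AS_eq_one v ρ0 hns s (le_of_eq hVs)
        refine ⟨toAdd β, ?_⟩
        rw [hkey2, Valuation.map_mul, Valuation.map_mul, hAS, mul_one, ← hβ, ← WithZero.coe_mul]
        congr 1
        rw [two_mul, ofAdd_add, ofAdd_toAdd]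
      · -- w is larger than 2
        have hwne : w ≠ 0 := by
          intro h0
          rw [h0, Valuation.map_zero] at hgt
          exact (zero_le' (a := Valued.v (2 : v.adicCompletion K))).not_gt hgt
        have hwne' : Valued.v w ≠ 0 := (Valuation.ne_zero_iff Valued.v).mpr hwne
        obtain ⟨α, hα⟩ := WithZero.ne_zero_iff_exists.mp ((Valuation.ne_zero_iff Valued.v).mpr hwne)
        have hww2 : Valued.v (w * (w + 2)) = Valued.v w * Valued.v w := by
          rw [Valuation.map_mul, Valuation.map_add_eq_of_lt_left _ hgt]
        have h4ρ : Valued.v (4 * intCoe v ρ0) < Valued.v (w * (w + 2)) := by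
          have h4 : (4 : v.adicCompletion K) = 2 * 2 := by norm_num
          rw [hww2, h4, Valuation.map_mul, Valuation.map_mul, hVρ, mul_one]
          exact mul_lt_mul_of_le_of_lt_of_nonneg_of_pos hgt.le hgt zero_le' (lt_of_le_of_lt zero_le' hgt)
        rw [hkey, Valuation.map_sub_eq_of_lt_left _ h4ρ, hww2]
        refine ⟨toAdd α, ?_⟩
        rw [← hα, ← WithZero.coe_mul]
        congr 1
        rw [two_mul, ofAdd_add, ofAdd_toAdd]
  · -- odd residue characteristic : take Δ a lift of a non-square
    obtain ⟨c, hc⟩ := FiniteField.exists_nonsquare hchar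
    obtain ⟨Δ0, hΔ0⟩ := Ideal.Quotient.mk_surjective c
    have hns : ∀ rbar : 𝓞 K ⧸ v.asIdeal, rbar ^ 2 ≠ Ideal.Quotient.mk v.asIdeal Δ0 := by
      intro rbar hsq
      exact hc ⟨rbar, by rw [hΔ0.symm, ← hsq, pow_two]⟩
    have hcne : c ≠ 0 := fun h => hns 0 (by simp [hΔ0, h])
    have hΔnot : Δ0 ∉ v.asIdeal := fun hmem =>
      hcne (by rw [← hΔ0]; exact Ideal.Quotient.eq_zero_iff_mem.mpr hmem)
    refine ⟨intCoe v Δ0, (val_intCoe_eq_one_iff v Δ0).mpr hΔnot, fun u hu => ⟨0, ?_⟩⟩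
    rw [val_sub_sq_eq_one v Δ0 hns u hu]
    simp

/-- `z` does not have odd valuation. -/
def NotOddVal (z : v.adicCompletion K) : Prop :=
  ∀ j : ℤ, Valued.v z ≠ ((ofAdd (2 * j + 1) : Multiplicative ℤ) : ℤᵐ⁰)

lemma notOddVal_of_even {z : v.adicCompletion K} {i : ℤ}
    (h : Valued.v z = ((ofAdd (2 * i) : Multiplicative ℤ) : ℤᵐ⁰)) : NotOddVal v z := by
  intro j hj
  rw [h] at hj
  rw [WithZero.coe_inj] at hj
  have := ofAdd.injective hj  -- 2i = 2j+1
  omega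

lemma notOddVal_of_zero {z : v.adicCompletion K} (h : z = 0) : NotOddVal v z := by
  intro j hj
  rw [h, Valuation.map_zero] at hj
  exact WithZero.zero_ne_coe hj

lemma val_sq {z : v.adicCompletion K} {γ : Multiplicative ℤ}
    (h : Valued.v z = (γ : ℤᵐ⁰)) :
    Valued.v (z ^ 2) = ((ofAdd (2 * toAdd γ) : Multiplicative ℤ) : ℤᵐ⁰) := by
  rw [pow_two, Valuation.map_mul, h, ← WithZero.coe_mul]
  congr 1
  rw [two_mul, ofAdd_add, ofAdd_toAdd]

/-- The main parity property : `y² - Δ t²` never has odd valuation. -/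
lemma notOddVal_goodDelta {Δ : v.adicCompletion K} (hΔ1 : Valued.v Δ = 1)
    (hgood : ∀ u : v.adicCompletion K, Valued.v u ≤ 1 →
      ∃ i : ℤ, Valued.v (u ^ 2 - Δ) = ((ofAdd (2 * i) : Multiplicative ℤ) : ℤᵐ⁰))
    (y t : v.adicCompletion K) : NotOddVal v (y ^ 2 - Δ * t ^ 2) := by
  by_cases ht : t = 0
  · subst ht
    by_cases hy : y = 0
    · exact notOddVal_of_zero v (by rw [hy]; ring)
    · obtain ⟨γ, hγ⟩ := WithZero.ne_zero_iff_exists.mp ((Valuation.ne_zero_iff Valued.v).mpr hy)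
      refine notOddVal_of_even v (i := toAdd γ) ?_
      rw [show y ^ 2 - Δ * 0 ^ 2 = y ^ 2 by ring]
      exact val_sq v hγ.symm
  · have htne : Valued.v t ≠ 0 := (Valuation.ne_zero_iff Valued.v).mpr ht
    obtain ⟨τ, hτ⟩ := WithZero.ne_zero_iff_exists.mp htne
    rcases le_or_gt (Valued.v y) (Valued.v t) with hle | hgt
    · -- y/t is integral
      set u : v.adicCompletion K := y / t with hu
      have hu1 : Valued.v u ≤ 1 := by
        rw [hu, Valuation.map_div, ← hτ]
        exact div_le_one_of_le₀ (by rw [hτ]; exact hle) zero_le'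
      obtain ⟨i, hi⟩ := hgood u hu1
      have hz : y ^ 2 - Δ * t ^ 2 = t ^ 2 * (u ^ 2 - Δ) := by
        rw [hu]; field_simp
      refine notOddVal_of_even v (i := toAdd τ + i) ?_
      rw [hz, Valuation.map_mul, val_sq v hτ.symm, hi, ← WithZero.coe_mul]
      congr 1
      rw [← ofAdd_add]
      congr 1
      ring
    · -- y dominates
      have hyne : y ≠ 0 := by
        intro h0
        rw [h0, Valuation.map_zero] at hgt
        exact (zero_le' (a := Valued.v t)).not_gt hgt
      obtain ⟨γ, hγ⟩ := WithZero.ne_zero_iff_exists.mp ((Valuation.ne_zero_iff Valued.v).mpr hyne)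
      have hΔt : Valued.v (Δ * t ^ 2) < Valued.v (y ^ 2) := by
        rw [Valuation.map_mul, hΔ1, one_mul, pow_two, pow_two, Valuation.map_mul,
          Valuation.map_mul]
        exact mul_lt_mul_of_le_of_lt_of_nonneg_of_pos hgt.le hgt zero_le' (lt_of_le_of_lt zero_le' hgt)
      refine notOddVal_of_even v (i := toAdd γ) ?_
      rw [Valuation.map_sub_eq_of_lt_left _ hΔt]
      exact val_sq v hγ.symm

/-- `(a, Δ)_v = -1` : the Hilbert equation has no nontrivial solution. -/
lemma not_hilbertSolvable_goodDelta {Δ a : v.adicCompletion K} (hΔ1 : Valued.v Δ = 1)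
    (hP : ∀ y t : v.adicCompletion K, NotOddVal v (y ^ 2 - Δ * t ^ 2))
    (hodd : ∃ j : ℤ, Valued.v a = ((ofAdd (2 * j + 1) : Multiplicative ℤ) : ℤᵐ⁰)) :
    ¬HilbertSolvable v a Δ := by
  obtain ⟨j, hj⟩ := hodd
  have hane : a ≠ 0 := by
    intro h0
    rw [h0, Valuation.map_zero] at hj
    exact WithZero.zero_ne_coe hj
  rintro ⟨x0, x1, x2, hne, heq⟩
  by_cases h1 : x1 = 0
  · -- then Δ would be a square, contradicting parity applied to a cleverly chosen point
    have hx02 : x0 ^ 2 = Δ * x2 ^ 2 := by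
      have := heq
      rw [h1] at this
      ring_nf at this ⊢
      linear_combination this
    by_cases h2 : x2 = 0
    · have hx0 : x0 = 0 := by
        have : x0 ^ 2 = 0 := by rw [hx02, h2]; ring
        exact pow_eq_zero_iff (n := 2) (by norm_num) |>.mp this
      exact hne (by simp [hx0, h1, h2])
    · have h2ne : (2 : v.adicCompletion K) ≠ 0 := by
        have h : (algebraMap K (v.adicCompletion K)) 2 = (2 : v.adicCompletion K) := by
          rw [show (2 : K) = 1 + 1 by norm_num, map_add, map_one]
          norm_num
        intro h0
        apply two_ne_zero (α := K)
        apply (map_eq_zero (algebraMap K (v.adicCompletion K))).mp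
        rw [h, h0]
      set s : v.adicCompletion K := x0 / x2 with hs
      have hΔs : Δ = s ^ 2 := by
        rw [hs]; field_simp; linear_combination -hx02
      have hsne : s ≠ 0 := by
        intro h0
        rw [h0] at hΔs
        rw [hΔs] at hΔ1
        simp at hΔ1
      set y : v.adicCompletion K := (1 + a) / 2 with hy
      set t : v.adicCompletion K := (1 - a) / (2 * s) with htdef
      have hcalc : y ^ 2 - Δ * t ^ 2 = a := by
        rw [hy, htdef, hΔs]
        field_simp
        ring
      exact hP y t j (by rw [hcalc, hj])
  · -- a x₁² has odd valuation but equals y² - Δ t²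
    have hax : a * x1 ^ 2 = x0 ^ 2 - Δ * x2 ^ 2 := by linear_combination -heq
    obtain ⟨ξ, hξ⟩ := WithZero.ne_zero_iff_exists.mp ((Valuation.ne_zero_iff Valued.v).mpr h1)
    refine hP x0 x2 (j + toAdd ξ) ?_
    rw [← hax, Valuation.map_mul, hj, val_sq v hξ.symm, ← WithZero.coe_mul]
    congr 1
    rw [← ofAdd_add]
    congr 1
    ring

/-- The recursive sequence approximating a root of `c² + c = w`. -/
noncomputable def sqSeq (w : v.adicCompletion K) : ℕ → v.adicCompletion K
  | 0 => 0
  | n + 1 => w - (sqSeq w n) ^ 2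

lemma sqSeq_val_le {w : v.adicCompletion K} (hw : Valued.v w < 1) :
    ∀ n, Valued.v (sqSeq v w n) ≤ Valued.v w := by
  intro n
  induction n with
  | zero => simp [sqSeq]
  | succ n ih =>
    show Valued.v (w - (sqSeq v w n) ^ 2) ≤ Valued.v w
    refine le_trans (Valuation.map_sub _ _ _) (max_le le_rfl ?_)
    rw [pow_two, Valuation.map_mul]
    calc Valued.v (sqSeq v w n) * Valued.v (sqSeq v w n)
        ≤ Valued.v w * Valued.v w := mul_le_mul' ih ih
    _ ≤ 1 * Valued.v w := mul_le_mul_left hw.le _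
    _ = Valued.v w := one_mul _

lemma sqSeq_diff_le {w : v.adicCompletion K} (hw : Valued.v w < 1) :
    ∀ n, Valued.v (sqSeq v w (n + 1) - sqSeq v w n) ≤ Valued.v w ^ (n + 1) := by
  intro n
  induction n with
  | zero => simp [sqSeq]
  | succ n ih =>
    have hkey : sqSeq v w (n + 2) - sqSeq v w (n + 1)
        = (sqSeq v w n - sqSeq v w (n + 1)) * (sqSeq v w n + sqSeq v w (n + 1)) := by
      show (w - (sqSeq v w (n + 1)) ^ 2) - (w - (sqSeq v w n) ^ 2) = _
      ring
    rw [hkey, Valuation.map_mul]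
    have h1 : Valued.v (sqSeq v w n - sqSeq v w (n + 1)) ≤ Valued.v w ^ (n + 1) := by
      rw [← Valuation.map_neg, neg_sub]; exact ih
    have h2 : Valued.v (sqSeq v w n + sqSeq v w (n + 1)) ≤ Valued.v w :=
      le_trans (Valuation.map_add _ _ _) (max_le (sqSeq_val_le v hw n) (sqSeq_val_le v hw (n+1)))
    calc Valued.v (sqSeq v w n - sqSeq v w (n + 1)) * Valued.v (sqSeq v w n + sqSeq v w (n + 1))
        ≤ Valued.v w ^ (n + 1) * Valued.v w := mul_le_mul' h1 h2
    _ = Valued.v w ^ (n + 2) := (pow_succ _ (n + 1)).symm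

lemma sqSeq_dist_le {w : v.adicCompletion K} (hw : Valued.v w < 1) :
    ∀ n m, n ≤ m → Valued.v (sqSeq v w m - sqSeq v w n) ≤ Valued.v w ^ (n + 1) := by
  intro n m hnm
  induction m, hnm using Nat.le_induction with
  | base => simp
  | succ m hnm ih =>
    have : sqSeq v w (m + 1) - sqSeq v w n
        = (sqSeq v w (m + 1) - sqSeq v w m) + (sqSeq v w m - sqSeq v w n) := by ring
    rw [this]
    refine le_trans (Valuation.map_add _ _ _) (max_le ?_ ih)
    refine le_trans (sqSeq_diff_le v hw m) ?_
    -- Valued.v w ^ (m+1) ≤ Valued.v w ^ (n+1) since m ≥ n and Valued.v w ≤ 1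
    exact pow_le_pow_right_of_le_one' hw.le (by omega)

/-- Solving `c² + c = w` for `w` of positive valuation, by completeness. -/
lemma exists_AS_root {w : v.adicCompletion K} (hw : Valued.v w < 1) :
    ∃ c : v.adicCompletion K, c ^ 2 + c = w ∧ Valued.v c < 1 := by
  by_cases hw0 : w = 0
  · exact ⟨0, by rw [hw0]; ring, by simpa using hw⟩
  have hwne : Valued.v w ≠ 0 := (Valuation.ne_zero_iff Valued.v).mpr hw0
  obtain ⟨κ, hκ⟩ := WithZero.ne_zero_iff_exists.mp hwne
  have hκ1 : toAdd κ ≤ -1 := by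
    have : (κ : ℤᵐ⁰) < 1 := by rw [hκ]; exact hw
    rw [← WithZero.coe_one, WithZero.coe_lt_coe, ← toAdd_lt, toAdd_one] at this
    omega
  -- the sequence is Cauchy
  have hcauchy : CauchySeq (sqSeq v w) := by
    rw [(Valued.hasBasis_uniformity (v.adicCompletion K) ℤᵐ⁰).cauchySeq_iff]
    intro γ _
    obtain ⟨g, hg⟩ : ∃ g : Multiplicative ℤ,
        (MonoidWithZeroHom.ValueGroup₀.embedding γ.1 : ℤᵐ⁰) = g :=
      ⟨WithZero.unzero ((map_ne_zero_iff _
        MonoidWithZeroHom.ValueGroup₀.embedding_injective).mpr γ.ne_zero),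
        (WithZero.coe_unzero _).symm⟩
    refine ⟨(toAdd g).natAbs + 1, fun m hm n hn => ?_⟩
    have hbound : ∀ i j : ℕ, ((toAdd g).natAbs + 1) ≤ i → i ≤ j →
        Valued.v (sqSeq v w j - sqSeq v w i) < MonoidWithZeroHom.ValueGroup₀.embedding γ.1 := by
      intro i j hi hij
      refine lt_of_le_of_lt (sqSeq_dist_le v hw i j hij) ?_
      rw [hg, ← hκ, ← WithZero.coe_pow, WithZero.coe_lt_coe, ← toAdd_lt, toAdd_pow,
        nsmul_eq_mul]
      push_cast
      have hipos : (0 : ℤ) ≤ (i : ℤ) := Int.natCast_nonneg i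
      have hmul : ((i : ℤ) + 1) * toAdd κ ≤ -((i : ℤ) + 1) := by nlinarith
      refine lt_of_le_of_lt hmul ?_
      omega
    rcases le_total m n with h | h
    · exact (Valuation.restrict_lt_iff_lt_embedding _).mpr (hbound m n hm h)
    · refine (Valuation.restrict_lt_iff_lt_embedding _).mpr ?_
      show Valued.v (sqSeq v w n - sqSeq v w m) < MonoidWithZeroHom.ValueGroup₀.embedding γ.1
      rw [show sqSeq v w n - sqSeq v w m = -(sqSeq v w m - sqSeq v w n) by ring,
        Valuation.map_neg]
      exact hbound n m hn h
  obtain ⟨c, hc⟩ := cauchySeq_tendsto_of_complete hcauchy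
  have hrec : ∀ n, (sqSeq v w n) ^ 2 + sqSeq v w (n + 1) = w := by
    intro n
    show (sqSeq v w n) ^ 2 + (w - (sqSeq v w n) ^ 2) = w
    ring
  have htend1 : Tendsto (fun n => (sqSeq v w n) ^ 2 + sqSeq v w (n + 1)) atTop
      (nhds (c ^ 2 + c)) := by
    refine Tendsto.add (hc.pow 2) ?_
    exact hc.comp (tendsto_add_atTop_nat 1)
  have heqn : Tendsto (fun _ : ℕ => w) atTop (nhds (c ^ 2 + c)) := by
    convert htend1 using 2 with n
    rw [hrec]
  have hceq : c ^ 2 + c = w := (tendsto_nhds_unique tendsto_const_nhds heqn).symm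
  refine ⟨c, hceq, ?_⟩
  -- the limit has small valuation
  have hball : {y : v.adicCompletion K | Valued.v (y - c) < 1} ∈ nhds c := by
    rw [Valued.mem_nhds]
    exact ⟨1, by simp⟩
  obtain ⟨n, hn⟩ := (hc.eventually (by exact hball)).exists
  have h1 : Valued.v (c - sqSeq v w n) < 1 := by
    rw [show c - sqSeq v w n = -(sqSeq v w n - c) by ring, Valuation.map_neg]
    exact hn
  have : c = (c - sqSeq v w n) + sqSeq v w n := by ring
  rw [this]
  exact lt_of_le_of_lt (Valuation.map_add _ _ _)
    (max_lt h1 (lt_of_le_of_lt (sqSeq_val_le v hw n) hw))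

lemma intCoe_two : intCoe v 2 = (2 : v.adicCompletion K) := by
  simp [intCoe, map_ofNat]

lemma val_two_le_one : Valued.v (2 : v.adicCompletion K) ≤ 1 := by
  rw [← intCoe_two]
  exact val_intCoe_le_one v 2

lemma twoNeZeroCompl : (2 : v.adicCompletion K) ≠ 0 := by
  have h : (algebraMap K (v.adicCompletion K)) 2 = (2 : v.adicCompletion K) := by
    rw [show (2 : K) = 1 + 1 by norm_num, map_add, map_one]
    norm_num
  intro h0
  apply two_ne_zero (α := K)
  apply (map_eq_zero (algebraMap K (v.adicCompletion K))).mp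
  rw [h, h0]

/-- The bridge between `adicAddVal` and the `ℤᵐ⁰`-valued valuation. -/
lemma adicAddVal_eq_iff (x : v.adicCompletion K) (n : ℤ) :
    adicAddVal v x = (n : WithTop ℤ) ↔
      Valued.v x = ((ofAdd (-n) : Multiplicative ℤ) : ℤᵐ⁰) := by
  by_cases h : x = 0
  · subst h
    simp only [adicAddVal, dif_pos]
    constructor
    · intro ht; exact absurd ht.symm (WithTop.coe_ne_top (a := n))
    · intro hv
      rw [Valuation.map_zero] at hv
      exact absurd hv.symm WithZero.coe_ne_zero
  · simp only [adicAddVal, dif_neg h]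
    rw [WithTop.coe_eq_coe]
    constructor
    · intro heq
      have : WithZero.unzero ((Valued.v).ne_zero_iff.mpr h) = ofAdd (-n) := by
        rw [← ofAdd_toAdd (WithZero.unzero _)]
        congr 1
        omega
      rw [← WithZero.coe_unzero ((Valued.v).ne_zero_iff.mpr h), this]
    · intro hv
      have : WithZero.unzero ((Valued.v).ne_zero_iff.mpr h) = ofAdd (-n) := by
        apply WithZero.coe_inj.mp
        rw [WithZero.coe_unzero, hv]
      rw [this, toAdd_ofAdd]
      omega

lemma adicAddVal_zero_iff (x : v.adicCompletion K) :
    adicAddVal v x = 0 ↔ Valued.v x = 1 := by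
  have := adicAddVal_eq_iff v x 0
  simp only [Int.cast_zero, neg_zero, ofAdd_zero, WithZero.coe_one] at this
  exact_mod_cast this

/-- Stability of non-solvability under small perturbation of the last coefficient. -/
lemma stable_unsolvable {a x x' : v.adicCompletion K} (hx1 : Valued.v x = 1)
    (hns : ¬HilbertSolvable v a x)
    (hclose : Valued.v (x' - x) < Valued.v (4 : v.adicCompletion K)) :
    Valued.v x' = 1 ∧ ¬HilbertSolvable v a x' := by
  have h2ne := twoNeZeroCompl v
  have h4eq : (4 : v.adicCompletion K) = 2 * 2 := by norm_num
  have h4ne : (4 : v.adicCompletion K) ≠ 0 := by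
    rw [h4eq]; exact mul_ne_zero h2ne h2ne
  have hV4ne : Valued.v (4 : v.adicCompletion K) ≠ 0 := (Valuation.ne_zero_iff _).mpr h4ne
  have hV4le : Valued.v (4 : v.adicCompletion K) ≤ 1 := by
    rw [h4eq, Valuation.map_mul]
    calc Valued.v (2 : v.adicCompletion K) * Valued.v (2 : v.adicCompletion K)
        ≤ 1 * 1 := mul_le_mul' (val_two_le_one v) (val_two_le_one v)
    _ = 1 := one_mul _
  have hxne : x ≠ 0 := by
    intro h0; rw [h0, Valuation.map_zero] at hx1; exact zero_ne_one hx1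
  -- x' is also a unit
  have hx'1 : Valued.v x' = 1 := by
    have : x' = x + (x' - x) := by ring
    rw [this, Valuation.map_add_eq_of_lt_left _ (by rw [hx1]; exact lt_of_lt_of_le hclose hV4le),
      hx1]
  refine ⟨hx'1, ?_⟩
  -- x'/x is a square
  set w : v.adicCompletion K := (x' / x - 1) / 4 with hwdef
  have hVw : Valued.v w < 1 := by
    have hd : x' / x - 1 = (x' - x) / x := by field_simp
    rw [hwdef, hd, Valuation.map_div, Valuation.map_div, hx1, div_one]
    rw [div_lt_iff₀ (lt_of_le_of_ne (zero_le') (Ne.symm hV4ne)), one_mul]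
    exact hclose
  obtain ⟨c, hceq, hcval⟩ := exists_AS_root v hVw
  set s : v.adicCompletion K := 1 + 2 * c with hsdef
  have hs2 : s ^ 2 = x' / x := by
    have : s ^ 2 = 1 + 4 * (c ^ 2 + c) := by rw [hsdef]; ring
    rw [this, hceq, hwdef]
    field_simp
    ring
  have hsne : s ≠ 0 := by
    have hV2c : Valued.v (2 * c) < 1 := by
      rw [Valuation.map_mul]
      calc Valued.v (2 : v.adicCompletion K) * Valued.v c ≤ 1 * Valued.v c :=
            mul_le_mul_left (val_two_le_one v) _
      _ = Valued.v c := one_mul _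
      _ < 1 := hcval
    have : Valued.v s = 1 := by
      rw [hsdef, Valuation.map_add_eq_of_lt_left _ (by rw [Valuation.map_one]; exact hV2c),
        Valuation.map_one]
    intro h0; rw [h0, Valuation.map_zero] at this; exact zero_ne_one this
  -- transfer solutions
  rintro ⟨x0, x1, x2, hne, heq⟩
  apply hns
  refine ⟨x0, x1, s * x2, ?_, ?_⟩
  · intro hcon
    rw [Prod.mk.injEq, Prod.mk.injEq] at hcon
    obtain ⟨h0, h1, h2⟩ := hcon
    exact hne (by
      rw [Prod.mk.injEq, Prod.mk.injEq]
      exact ⟨h0, h1, by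
        rcases mul_eq_zero.mp h2 with hs0 | hx20
        · exact absurd hs0 hsne
        · exact hx20⟩)
  · have hxs : x * (s * x2) ^ 2 = x' * x2 ^ 2 := by
      have : x * s ^ 2 = x' := by
        rw [hs2]; field_simp
      calc x * (s * x2) ^ 2 = (x * s ^ 2) * x2 ^ 2 := by ring
      _ = x' * x2 ^ 2 := by rw [this]
    calc x0 ^ 2 - a * x1 ^ 2 - x * (s * x2) ^ 2
        = x0 ^ 2 - a * x1 ^ 2 - x' * x2 ^ 2 := by rw [hxs]
    _ = 0 := heq

end Aux

/-- Let `v` be a finite place of a number field `K` and `a ∈ K_v^×` with `v(a)`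
odd. Then the set `{x ∈ O_{K_v}^× : (a,x)_v = -1}` is a nonempty open subset of `K_v`; in
particular there is a unit `x` of `O_{K_v}` such that `x₀² - a x₁² - x x₂² = 0` has no
nontrivial solution in `K_v³`.
(An element of `K_v` is a unit of `O_{K_v}` iff its normalized additive valuation is `0`.) -/
theorem hilbert_symbol_neg_one_units_isOpen_nonempty_of_odd_valuation
    {K : Type*} [Field K] [NumberField K] (v : HeightOneSpectrum (𝓞 K))
    (a : v.adicCompletion K) (ha : a ≠ 0)
    (hva : ∃ m : ℤ, adicAddVal v a = (2 * m + 1 : ℤ)) :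
    (IsOpen {x : v.adicCompletion K | adicAddVal v x = 0 ∧ ¬HilbertSolvable v a x} ∧
      {x : v.adicCompletion K | adicAddVal v x = 0 ∧ ¬HilbertSolvable v a x}.Nonempty) ∧
    ∃ x : v.adicCompletion K, adicAddVal v x = 0 ∧ ¬HilbertSolvable v a x := by
  obtain ⟨m, hm⟩ := hva
  have hodd : ∃ j : ℤ, Valued.v a
      = ((Multiplicative.ofAdd (2 * j + 1) : Multiplicative ℤ) : ℤᵐ⁰) := by
    refine ⟨-m - 1, ?_⟩
    rw [(adicAddVal_eq_iff v a (2 * m + 1)).mp hm]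
    congr 2
    ring
  obtain ⟨Δ, hΔ1, hgood⟩ := exists_good_delta v
  have hP := notOddVal_goodDelta v hΔ1 hgood
  have hnotsolv : ¬HilbertSolvable v a Δ := not_hilbertSolvable_goodDelta v hΔ1 hP hodd
  have hΔmem : adicAddVal v Δ = 0 := (adicAddVal_zero_iff v Δ).mpr hΔ1
  have hV4ne : Valued.v (4 : v.adicCompletion K) ≠ 0 := by
    refine (Valuation.ne_zero_iff _).mpr ?_
    rw [show (4 : v.adicCompletion K) = 2 * 2 by norm_num]
    exact mul_ne_zero (twoNeZeroCompl v) (twoNeZeroCompl v)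
  have hopen : IsOpen {x : v.adicCompletion K | adicAddVal v x = 0 ∧ ¬HilbertSolvable v a x} := by
    rw [isOpen_iff_mem_nhds]
    rintro x ⟨hx0, hxns⟩
    have hx1 : Valued.v x = 1 := (adicAddVal_zero_iff v x).mp hx0
    rw [Valued.mem_nhds]
    refine ⟨Units.mk0 (Valued.v.restrict (4 : v.adicCompletion K))
      (mt (Valuation.restrict_eq_zero_iff _).mp hV4ne), fun y hy => ?_⟩
    have hst := stable_unsolvable v hx1 hxns ((Valuation.restrict_lt_iff _).mp hy)
    exact ⟨(adicAddVal_zero_iff v y).mpr hst.1, hst.2⟩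
  exact ⟨⟨hopen, ⟨Δ, hΔmem, hnotsolv⟩⟩, ⟨Δ, hΔmem, hnotsolv⟩⟩
end

section
/- Let K be a number field and let S be a finite nonempty set of places of K containing no complex place and no 2-adic place. Then there exists a ∈ O_K which is not a square in K and satisfies: τ_v(a) < 0 for every real place v ∈ S (where τ_v : K → ℝ is the corresponding real embedding); a is a square in K_w^× for every 2-adic place w of K; and v(a) is odd for every finite place v ∈ S. In particular, a is not a square in K_v for every v ∈ S. -/
open IsDedekindDomain IsDedekindDomain.HeightOneSpectrum NumberField

open Multiplicative Filter Topology

set_option linter.unnecessarySimpa false in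
lemma zm0_exists_pow_lt {q : (WithZero (Multiplicative ℤ))} (hq : q < 1) (γ : (WithZero (Multiplicative ℤ))ˣ) : ∃ N : ℕ, q ^ N < (γ : (WithZero (Multiplicative ℤ))) := by
  rcases eq_or_ne q 0 with rfl | hq0
  · exact ⟨1, by simpa using γ.zero_lt⟩
  obtain ⟨u, rfl⟩ := WithZero.ne_zero_iff_exists.mp hq0
  obtain ⟨g, hg⟩ := WithZero.ne_zero_iff_exists.mp γ.ne_zero
  refine ⟨(Multiplicative.toAdd g).natAbs + 1, ?_⟩
  rw [← hg, ← WithZero.coe_pow, WithZero.coe_lt_coe, ← Multiplicative.toAdd_lt, toAdd_pow,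
    nsmul_eq_mul]
  have hu : Multiplicative.toAdd u < 0 := by
    rw [← WithZero.coe_one, WithZero.coe_lt_coe, ← Multiplicative.toAdd_lt, toAdd_one] at hq
    exact hq
  have h1 : (0:ℤ) ≤ ((Multiplicative.toAdd g).natAbs : ℤ) := Int.natCast_nonneg _
  have h2 : -((Multiplicative.toAdd g).natAbs : ℤ) ≤ Multiplicative.toAdd g := by
    rw [← Int.abs_eq_natAbs]; exact neg_abs_le _
  have hu' : Multiplicative.toAdd u ≤ -1 := by omega
  push_cast
  have h3 : (|Multiplicative.toAdd g|+1) * Multiplicative.toAdd u ≤ (|Multiplicative.toAdd g|+1) * (-1) :=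
    mul_le_mul_of_nonneg_left hu' (by positivity)
  have h4 := neg_abs_le (Multiplicative.toAdd g)
  linarith

lemma exists_sqrt_of_val_sub_one_le {L : Type*} [Field L] [Valued L (WithZero (Multiplicative ℤ))] [CompleteSpace L]
    (a : L) (h2ne : (2 : L) ≠ 0) (h2 : Valued.v (2 : L) < 1)
    (ha : Valued.v (a - 1) ≤ Valued.v (2 : L) ^ 3) :
    ∃ y : L, y ≠ 0 ∧ y ^ 2 = a := by
  set q : (WithZero (Multiplicative ℤ)) := Valued.v (2 : L) with hqdef
  have hq0 : q ≠ 0 := (Valuation.ne_zero_iff _).mpr h2ne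
  have hq1 : q ≤ 1 := le_of_lt h2
  set t : L := a - 1 with htdef
  let z : ℕ → L := fun n => Nat.rec (0 : L) (fun _ w => (t - w ^ 2) / 2) n
  have hz0 : z 0 = 0 := rfl
  have hzs : ∀ n, z (n + 1) = (t - z n ^ 2) / 2 := fun n => rfl
  have hpow_le : ∀ i j : ℕ, i ≤ j → q ^ j ≤ q ^ i := by
    intro i j h
    obtain ⟨k, rfl⟩ := Nat.exists_eq_add_of_le h
    induction k with
    | zero => simp
    | succ k ih =>
      rw [← add_assoc, pow_succ]
      exact le_trans (mul_le_of_le_one_right' hq1) (ih (by omega))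
  have hq3 : q ^ 3 / q = q ^ 2 := by
    rw [pow_succ]; exact mul_div_cancel_right₀ _ hq0
  have hsub3 : ∀ w : L, Valued.v w ≤ q ^ 2 → Valued.v (t - w ^ 2) ≤ q ^ 3 := by
    intro w hw
    refine le_trans (Valuation.map_sub _ _ _) (max_le ha ?_)
    rw [map_pow]
    calc Valued.v w ^ 2 ≤ (q ^ 2) ^ 2 := pow_le_pow_left' hw 2
    _ = q ^ 4 := by rw [← pow_mul]
    _ ≤ q ^ 3 := hpow_le 3 4 (by omega)
  have hbound : ∀ n, Valued.v (z n) ≤ q ^ 2 := by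
    intro n
    induction n with
    | zero => rw [hz0, map_zero]; exact zero_le'
    | succ n ih =>
      rw [hzs, map_div₀, ← hqdef, ← hq3]
      exact (div_le_div_iff_of_pos_right (zero_lt_iff.mpr hq0)).mpr (hsub3 _ ih)
  have hdiff : ∀ n, Valued.v (z (n + 1) - z n) ≤ q ^ (n + 2) := by
    intro n
    induction n with
    | zero =>
      rw [hzs, hz0]
      simp only [sub_zero]
      rw [map_div₀, ← hqdef, ← hq3]
      refine (div_le_div_iff_of_pos_right (zero_lt_iff.mpr hq0)).mpr ?_
      simpa using hsub3 0 (by rw [map_zero]; exact zero_le')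
    | succ n ih =>
      have key : z (n + 2) - z (n + 1) = (z n - z (n + 1)) * (z n + z (n + 1)) / 2 := by
        rw [hzs (n + 1), hzs n]
        field_simp
        ring
      rw [key, map_div₀, map_mul, ← hqdef]
      have h1 : Valued.v (z n - z (n + 1)) ≤ q ^ (n + 2) := by
        rw [Valuation.map_sub_swap]; exact ih
      have h2' : Valued.v (z n + z (n + 1)) ≤ q ^ 2 :=
        le_trans (Valuation.map_add _ _ _) (max_le (hbound n) (hbound (n + 1)))
      have : Valued.v (z n - z (n + 1)) * Valued.v (z n + z (n + 1)) ≤ q ^ (n + 4) := by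
        calc Valued.v (z n - z (n + 1)) * Valued.v (z n + z (n + 1)) ≤ q ^ (n + 2) * q ^ 2 :=
          mul_le_mul' h1 h2'
        _ = q ^ (n + 4) := by rw [← pow_add]
      refine le_trans ((div_le_div_iff_of_pos_right (zero_lt_iff.mpr hq0)).mpr this) (le_of_eq ?_)
      rw [show n + 4 = (n + 3) + 1 by ring, pow_succ]
      exact mul_div_cancel_right₀ _ hq0
  have hgap : ∀ n k, Valued.v (z (n + k) - z n) ≤ q ^ (n + 2) := by
    intro n k
    induction k with
    | zero => simp
    | succ k ih =>
      have : z (n + (k + 1)) - z n = (z (n + k + 1) - z (n + k)) + (z (n + k) - z n) := by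
        rw [show n + (k + 1) = n + k + 1 by ring]; ring
      rw [this]
      refine le_trans (Valuation.map_add _ _ _) (max_le ?_ ih)
      exact le_trans (hdiff (n + k)) (hpow_le (n + 2) (n + k + 2) (by omega))
  have hcau : CauchySeq z := by
    rw [(Valued.hasBasis_uniformity L (WithZero (Multiplicative ℤ))).cauchySeq_iff]
    rintro γ -
    obtain ⟨N, hN⟩ := zm0_exists_pow_lt h2
      (Units.mk0 _ (MonoidWithZeroHom.ValueGroup₀.embedding_unit_ne_zero γ))
    refine ⟨N, fun m hm n hn => ?_⟩
    have key : ∀ i j : ℕ, N ≤ i → i ≤ j → Valued.v (z j - z i) ≤ q ^ N := by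
      intro i j hi hij
      obtain ⟨k, rfl⟩ := Nat.exists_eq_add_of_le hij
      exact le_trans (hgap i k) (hpow_le N (i + 2) (by omega))
    show Valued.v.restrict (z n - z m) < γ.1
    rw [Valuation.restrict_lt_iff_lt_embedding]
    rcases le_total m n with h | h
    · exact lt_of_le_of_lt (key m n hm h) hN
    · rw [Valuation.map_sub_swap]
      exact lt_of_le_of_lt (key n m hn h) hN
  obtain ⟨y0, hy0⟩ := cauchySeq_tendsto_of_complete hcau
  have hcont : Tendsto (fun n => (t - z n ^ 2) / 2) atTop (𝓝 ((t - y0 ^ 2) / 2)) := by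
    have h1 : Tendsto (fun n => t - z n ^ 2) atTop (𝓝 (t - y0 ^ 2)) :=
      tendsto_const_nhds.sub (hy0.pow 2)
    simpa only [div_eq_mul_inv] using h1.mul tendsto_const_nhds
  have hshift : Tendsto (fun n => (t - z n ^ 2) / 2) atTop (𝓝 y0) := by
    have := hy0.comp (tendsto_add_atTop_nat 1)
    simpa only [Function.comp_def, hzs] using this
  have hfix : y0 = (t - y0 ^ 2) / 2 := tendsto_nhds_unique hshift hcont
  rw [eq_div_iff h2ne] at hfix
  have hane : a ≠ 0 := by
    intro h
    rw [htdef, h, zero_sub, Valuation.map_neg, map_one] at ha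
    have : q ^ 3 < 1 := lt_of_le_of_lt (hpow_le 1 3 (by omega)) (by simpa using h2)
    exact absurd (lt_of_le_of_lt ha this) (lt_irrefl _)
  refine ⟨1 + y0, ?_, ?_⟩
  · intro h
    apply hane
    have : (1 + y0) ^ 2 = a := by linear_combination hfix + htdef
    rw [← this, h]
    ring
  · linear_combination hfix + htdef

set_option synthInstance.maxHeartbeats 1000000 in
set_option maxHeartbeats 2000000 in
/-- Let `K` be a number field and `S` a finite nonempty set of places of `K`
containing no complex place and no 2-adic place (`S` is given as a set `Sinf` of infinite
places, all real, together with a set `Sfin` of finite places, none above `2`). Then there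
exists `a ∈ O_K`, not a square in `K`, with: `τ_v(a) < 0` for every real place `v ∈ S`;
`a` a square in `K_w^×` for every 2-adic place `w` of `K`; and `v(a)` odd for every finite
place `v ∈ S`. In particular, `a` is not a square in `K_v` for every `v ∈ S`. -/
theorem exists_integer_nonsquare_with_local_conditions
    (K : Type*) [Field K] [NumberField K]
    (Sinf : Finset (InfinitePlace K)) (Sfin : Finset (HeightOneSpectrum (𝓞 K)))
    (hSreal : ∀ w ∈ Sinf, w.IsReal)
    (hSodd : ∀ v ∈ Sfin, (2 : 𝓞 K) ∉ v.asIdeal)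
    (hS : Sinf.Nonempty ∨ Sfin.Nonempty) :
    ∃ a : 𝓞 K,
      (¬∃ b : K, b ^ 2 = (a : K)) ∧
      (∀ w ∈ Sinf, ∀ hw : w.IsReal, InfinitePlace.embedding_of_isReal hw (a : K) < 0) ∧
      (∀ w : HeightOneSpectrum (𝓞 K), (2 : 𝓞 K) ∈ w.asIdeal →
        ∃ y : w.adicCompletion K, y ≠ 0 ∧ y ^ 2 = ((a : K) : w.adicCompletion K)) ∧
      (∀ v ∈ Sfin, ∃ m : ℤ, adicAddVal v ((a : K) : v.adicCompletion K) = (2 * m + 1 : ℤ)) ∧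
      (∀ w ∈ Sinf, ∀ hw : w.IsReal,
        ¬∃ t : ℝ, t ^ 2 = InfinitePlace.embedding_of_isReal hw (a : K)) ∧
      (∀ v ∈ Sfin, ¬∃ y : v.adicCompletion K, y ^ 2 = ((a : K) : v.adicCompletion K)) := by
  classical
  have hπ : ∀ v : {v // v ∈ Sfin}, ∃ π : 𝓞 K,
      v.1.intValuation π = Multiplicative.ofAdd (-1 : ℤ) :=
    fun v => v.1.intValuation_exists_uniformizer
  choose π hπval using hπ
  let I : Option {v // v ∈ Sfin} → Ideal (𝓞 K) := fun o =>
    o.elim (Ideal.span {8}) (fun v => v.1.asIdeal ^ 2)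
  let x : Option {v // v ∈ Sfin} → 𝓞 K := fun o => o.elim 1 π
  have hc2 : ∀ v : {v // v ∈ Sfin}, IsCoprime (Ideal.span {(2 : 𝓞 K)}) v.1.asIdeal := by
    intro v
    rw [Ideal.isCoprime_iff_sup_eq, sup_comm]
    by_contra hne
    have heq := v.1.isMaximal.eq_of_le hne le_sup_left
    exact hSodd v.1 v.2 (heq ▸ ((le_sup_right : Ideal.span {(2 : 𝓞 K)} ≤ _)
      (Ideal.mem_span_singleton_self 2)))
  have hc8 : ∀ v : {v // v ∈ Sfin}, IsCoprime (Ideal.span {(8 : 𝓞 K)}) (v.1.asIdeal ^ 2) := by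
    intro v
    have h8 : (Ideal.span {(8 : 𝓞 K)}) = Ideal.span {(2 : 𝓞 K)} ^ 3 := by
      rw [Ideal.span_singleton_pow]; norm_num
    rw [h8]
    exact (hc2 v).pow
  have hcop : Pairwise fun i j => IsCoprime (I i) (I j) := by
    intro i j hij
    match i, j with
    | none, none => exact absurd rfl hij
    | none, some v => exact hc8 v
    | some v, none => exact (hc8 v).symm
    | some v, some u =>
      have hvu : v.1.asIdeal ≠ u.1.asIdeal := by
        intro h
        exact hij (congrArg some (Subtype.ext (HeightOneSpectrum.ext h)))
      exact (Ideal.isCoprime_iff_sup_eq.mpr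
        (Ideal.IsMaximal.coprime_of_ne v.1.isMaximal u.1.isMaximal hvu)).pow
  obtain ⟨b, hb⟩ := Ideal.exists_forall_sub_mem_ideal hcop x
  set n₀ : ℕ := ∏ v ∈ Sfin.attach, (Ideal.absNorm v.1.asIdeal) ^ 2 with hn₀
  have hn₀pos : 0 < n₀ := Finset.prod_pos (fun v _ => pow_pos
    (Nat.pos_of_ne_zero (fun h => v.1.ne_bot (Ideal.absNorm_eq_zero_iff.mp h))) 2)
  set M : ℤ := 8 * n₀ with hM
  have hMpos : (0 : ℤ) < M := mul_pos (by norm_num) (by exact_mod_cast hn₀pos)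
  have hM8 : (M : 𝓞 K) ∈ Ideal.span {(8 : 𝓞 K)} := by
    rw [Ideal.mem_span_singleton]
    exact ⟨(n₀ : 𝓞 K), by rw [hM]; push_cast; ring⟩
  have hMv : ∀ v : {v // v ∈ Sfin}, (M : 𝓞 K) ∈ v.1.asIdeal ^ 2 := by
    intro v
    have h1 : ((Ideal.absNorm v.1.asIdeal : 𝓞 K)) ^ 2 ∈ v.1.asIdeal ^ 2 :=
      Ideal.pow_mem_pow (Ideal.absNorm_mem _) 2
    obtain ⟨k, hk⟩ : ((Ideal.absNorm v.1.asIdeal) ^ 2 : ℕ) ∣ n₀ :=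
      Finset.dvd_prod_of_mem _ (Finset.mem_attach _ v)
    have he : (M : 𝓞 K) = ((Ideal.absNorm v.1.asIdeal : 𝓞 K)) ^ 2 * (8 * (k : 𝓞 K)) := by
      rw [hM, hk]; push_cast; ring
    rw [he]
    exact Ideal.mul_mem_right _ _ h1
  let F : InfinitePlace K → ℝ := fun w =>
    if h : w.IsReal then (InfinitePlace.embedding_of_isReal h) (b : K) else 0
  obtain ⟨C, hC⟩ := Finset.exists_le (Sinf.image F)
  obtain ⟨T, hT⟩ := exists_nat_gt (C / (M : ℝ))
  have hTM : C < (T : ℝ) * (M : ℝ) := by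
    rwa [div_lt_iff₀ (by exact_mod_cast hMpos)] at hT
  set a : 𝓞 K := b - (((T : ℤ) * M : ℤ) : 𝓞 K) with hadef
  have hTM8 : (((T : ℤ) * M : ℤ) : 𝓞 K) ∈ Ideal.span {(8 : 𝓞 K)} := by
    push_cast
    exact Ideal.mul_mem_left _ _ hM8
  have hTMv : ∀ v : {v // v ∈ Sfin}, (((T : ℤ) * M : ℤ) : 𝓞 K) ∈ v.1.asIdeal ^ 2 := by
    intro v
    push_cast
    exact Ideal.mul_mem_left _ _ (hMv v)
  have ha8 : a - 1 ∈ Ideal.span {(8 : 𝓞 K)} := by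
    have h1 := hb none
    have he : a - 1 = (b - x none) - (((T : ℤ) * M : ℤ) : 𝓞 K) := by
      rw [hadef]; show _ = _ - (1 : 𝓞 K) - _; ring
    rw [he]
    exact Submodule.sub_mem _ h1 hTM8
  have hav : ∀ v : {v // v ∈ Sfin}, a - π v ∈ v.1.asIdeal ^ 2 := by
    intro v
    have h1 := hb (some v)
    have he : a - π v = (b - x (some v)) - (((T : ℤ) * M : ℤ) : 𝓞 K) := by
      rw [hadef]; show _ = _ - π v - _; ring
    rw [he]
    exact Submodule.sub_mem _ h1 (hTMv v)
  have hreal : ∀ w ∈ Sinf, ∀ hw : w.IsReal,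
      (InfinitePlace.embedding_of_isReal hw) (a : K) < 0 := by
    intro w hwS hw
    have hτ : (InfinitePlace.embedding_of_isReal hw) (a : K)
        = (InfinitePlace.embedding_of_isReal hw) (b : K) - (T : ℝ) * (M : ℝ) := by
      have he : ((a : 𝓞 K) : K) = (b : K) - (((T : ℤ) * M : ℤ) : K) := by
        rw [hadef]; push_cast; norm_cast
      rw [he, map_sub, map_intCast]; push_cast; ring
    have hFb : (InfinitePlace.embedding_of_isReal hw) (b : K) ≤ C := by
      have h := hC (F w) (Finset.mem_image_of_mem F hwS)
      simpa only [F, dif_pos hw] using h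
    rw [hτ]
    linarith
  have hvval : ∀ v : {v // v ∈ Sfin},
      v.1.intValuation a = ((Multiplicative.ofAdd (-1 : ℤ) : Multiplicative ℤ) : (WithZero (Multiplicative ℤ))) := by
    intro v
    have hlt : v.1.intValuation (a - π v) < v.1.intValuation (π v) := by
      rw [hπval v]
      refine lt_of_le_of_lt ((v.1.intValuation_le_pow_iff_dvd _ 2).mpr
        (Ideal.dvd_span_singleton.mpr (hav v))) ?_
      change WithZero.exp _ < WithZero.exp (-1 : ℤ)
      rw [WithZero.exp_lt_exp]
      norm_num
    have he : π v + (a - π v) = a := by ring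
    rw [← he, Valuation.map_add_eq_of_lt_left _ hlt, hπval v]
  have hxval : ∀ v : {v // v ∈ Sfin},
      Valued.v (((a : K)) : v.1.adicCompletion K)
        = ((Multiplicative.ofAdd (-1 : ℤ) : Multiplicative ℤ) : (WithZero (Multiplicative ℤ))) := by
    intro v
    rw [valuedAdicCompletion_eq_valuation']
    have he : (a : K) = algebraMap (𝓞 K) K a := rfl
    rw [he, valuation_of_algebraMap, hvval v]
  have h2sq : ∀ w : HeightOneSpectrum (𝓞 K), (2 : 𝓞 K) ∈ w.asIdeal →
      ∃ y : w.adicCompletion K, y ≠ 0 ∧ y ^ 2 = ((a : K) : w.adicCompletion K) := by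
    intro w hw2
    have hφ : ∀ k : K, algebraMap K (w.adicCompletion K) k = (k : w.adicCompletion K) :=
      fun k => rfl
    have h2e : (2 : w.adicCompletion K) = ((2 : K) : w.adicCompletion K) := by
      rw [← hφ, map_ofNat]
    have h2ne : (2 : w.adicCompletion K) ≠ 0 := by
      rw [h2e, ← hφ]
      exact (map_ne_zero (algebraMap K (w.adicCompletion K))).mpr two_ne_zero
    have h2lt : Valued.v (2 : w.adicCompletion K) < 1 := by
      rw [h2e, valuedAdicCompletion_eq_valuation']
      have he2 : (2 : K) = algebraMap (𝓞 K) K (2 : 𝓞 K) := by rw [map_ofNat]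
      rw [he2]
      exact (valuation_lt_one_iff_dvd w (2 : 𝓞 K)).mpr (Ideal.dvd_span_singleton.mpr hw2)
    obtain ⟨c, hc⟩ := Ideal.mem_span_singleton'.mp ha8
    have h1 : (a : K) - 1 = 8 * (c : K) := by
      have h := congrArg (algebraMap (𝓞 K) K) hc
      simp only [map_mul, map_sub, map_one, map_ofNat] at h
      have hac : algebraMap (𝓞 K) K a = (a : K) := rfl
      have hcc : algebraMap (𝓞 K) K c = (c : K) := rfl
      rw [hac, hcc] at h
      linear_combination -h
    have he : ((a : K) : w.adicCompletion K) - 1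
        = (2 : w.adicCompletion K) ^ 3 * ((c : K) : w.adicCompletion K) := by
      have e1 : ((a : K) : w.adicCompletion K) - 1
          = algebraMap K (w.adicCompletion K) ((a : K) - 1) := by
        rw [map_sub, map_one, hφ]
      rw [e1, h1, map_mul, hφ]
      congr 1
      rw [show (8 : K) = 2 ^ 3 by norm_num, ← hφ, map_pow, map_ofNat]
    have hval8 : Valued.v (((a : K) : w.adicCompletion K) - 1)
        ≤ Valued.v (2 : w.adicCompletion K) ^ 3 := by
      rw [he, map_mul, map_pow]
      refine mul_le_of_le_one_right' ?_
      rw [valuedAdicCompletion_eq_valuation']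
      exact w.valuation_le_one c
    exact exists_sqrt_of_val_sub_one_le _ h2ne h2lt hval8
  -- nonvanishing and nonsquareness at finite places of S
  have hxne : ∀ v : {v // v ∈ Sfin}, (((a : K)) : v.1.adicCompletion K) ≠ 0 := by
    intro v h
    have hv := hxval v
    rw [h, map_zero] at hv
    exact WithZero.zero_ne_coe hv
  have hnsq_fin : ∀ v : {v // v ∈ Sfin},
      ¬∃ y : v.1.adicCompletion K, y ^ 2 = ((a : K) : v.1.adicCompletion K) := by
    rintro v ⟨y, hy⟩
    have hyne : y ≠ 0 := by
      intro h
      rw [h] at hy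
      exact hxne v (by rw [← hy]; ring)
    have hvy : Valued.v y ≠ (0 : (WithZero (Multiplicative ℤ))) := (Valuation.ne_zero_iff _).mpr hyne
    obtain ⟨u, hu⟩ := WithZero.ne_zero_iff_exists.mp hvy
    have hval2 : Valued.v (y ^ 2) = ((u ^ 2 : Multiplicative ℤ) : (WithZero (Multiplicative ℤ))) := by
      rw [map_pow, ← hu]; norm_cast
    rw [hy, hxval v] at hval2
    have h2 : (u ^ 2 : Multiplicative ℤ) = Multiplicative.ofAdd (-1 : ℤ) :=
      WithZero.coe_inj.mp hval2.symm
    have h3 := congrArg Multiplicative.toAdd h2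
    rw [toAdd_pow, toAdd_ofAdd, nsmul_eq_mul] at h3
    push_cast at h3
    omega
  have hodd : ∀ v ∈ Sfin, ∃ m : ℤ,
      adicAddVal v ((a : K) : v.adicCompletion K) = ((2 * m + 1 : ℤ) : WithTop ℤ) := by
    intro v hv
    refine ⟨0, ?_⟩
    have hne := hxne ⟨v, hv⟩
    simp only [adicAddVal]
    rw [dif_neg hne]
    have hu : WithZero.unzero ((Valued.v).ne_zero_iff.mpr hne)
        = Multiplicative.ofAdd (-1 : ℤ) := by
      apply WithZero.coe_inj.mp
      rw [WithZero.coe_unzero]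
      exact hxval ⟨v, hv⟩
    rw [hu, toAdd_ofAdd]
    norm_num
  have hnsqK : ¬∃ bb : K, bb ^ 2 = (a : K) := by
    rintro ⟨bb, hbb⟩
    rcases hS with ⟨w, hw⟩ | ⟨v, hv⟩
    · have hwre := hSreal w hw
      have hneg := hreal w hw hwre
      have h2 : (InfinitePlace.embedding_of_isReal hwre bb) ^ 2
          = InfinitePlace.embedding_of_isReal hwre (a : K) := by rw [← map_pow, hbb]
      nlinarith [sq_nonneg (InfinitePlace.embedding_of_isReal hwre bb)]
    · refine hnsq_fin ⟨v, hv⟩ ⟨algebraMap K (v.adicCompletion K) bb, ?_⟩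
      rw [← map_pow, hbb]
      rfl
  have hnsq_real : ∀ w ∈ Sinf, ∀ hw : w.IsReal,
      ¬∃ t : ℝ, t ^ 2 = InfinitePlace.embedding_of_isReal hw (a : K) := by
    rintro w hwS hw ⟨t, ht⟩
    nlinarith [hreal w hwS hw, sq_nonneg t]
  exact ⟨a, hnsqK, hreal, h2sq, hodd, hnsq_real, fun v hv => hnsq_fin ⟨v, hv⟩⟩
end

section
/- Let v be an odd finite place of a number field K and let a, b, c ∈ K_v with a ≠ 0, v(a) even, v(b) ≥ 0 and v(c) ≥ 0. Then for every x ∈ K_v such that cx² + 1 ≠ 0 and (1+cb²)x² + b² ≠ 0, it is impossible that both (a, cx² + 1)_v = −1 and (a, (1+cb²)x² + b²)_v = −1. Consequently, for every x ∈ K_v with (cx²+1)((1+cb²)x²+b²) ≠ 0, the equation y² − a z² = (cx²+1)((1+cb²)x²+b²) has a solution (y,z) ∈ K_v² whenever (a, cx²+1)_v = (a, (1+cb²)x²+b²)_v. -/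
set_option synthInstance.maxHeartbeats 1000000
set_option maxHeartbeats 1000000


open IsDedekindDomain IsDedekindDomain.HeightOneSpectrum NumberField

/-! ### Auxiliary lemmas -/

namespace ChateletAux

open Multiplicative Filter Polynomial

local notation "ℤₘ₀" => WithZero (Multiplicative ℤ)

lemma pow_anti' {γ : ℤₘ₀} (h : γ ≤ 1) {m n : ℕ} (hmn : m ≤ n) : γ^n ≤ γ^m := by
  obtain ⟨k, rfl⟩ := Nat.exists_eq_add_of_le hmn
  induction k with
  | zero => simp
  | succ k ih =>
    have : γ^(m+(k+1)) = γ^(m+k) * γ := by rw [← pow_succ, Nat.add_succ]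
    rw [this]
    calc γ^(m+k) * γ ≤ γ^(m+k) * 1 := mul_le_mul_right h _
      _ = γ^(m+k) := mul_one _
      _ ≤ γ^m := ih (Nat.le_add_right m k)

lemma exists_pow_lt' {ε : ℤₘ₀} (hne : ε ≠ 0) (hlt : ε < 1) (γ : ℤₘ₀) (hγ : γ ≠ 0) :
    ∃ N : ℕ, ε^(N+1) < γ := by
  obtain ⟨a, rfl⟩ := WithZero.ne_zero_iff_exists.mp hne
  obtain ⟨c, rfl⟩ := WithZero.ne_zero_iff_exists.mp hγ
  rw [← WithZero.coe_one, WithZero.coe_lt_coe] at hlt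
  have ha : Multiplicative.toAdd a < 0 := by rwa [← toAdd_lt, toAdd_one] at hlt
  refine ⟨(Multiplicative.toAdd c).natAbs, ?_⟩
  rw [← WithZero.coe_pow, WithZero.coe_lt_coe, ← toAdd_lt, toAdd_pow]
  set A := Multiplicative.toAdd a
  set C := Multiplicative.toAdd c
  have : ((C.natAbs + 1 : ℕ) : ℤ) * A ≤ -((C.natAbs : ℤ) + 1) := by
    have hB : ((C.natAbs + 1 : ℕ) : ℤ) = (C.natAbs : ℤ) + 1 := by push_cast; ring
    rw [hB]
    have h1 : (0:ℤ) ≤ (C.natAbs : ℤ) + 1 := by positivity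
    nlinarith [ha]
  calc (C.natAbs + 1 : ℕ) • A = ((C.natAbs + 1 : ℕ) : ℤ) * A := by
        rw [← natCast_zsmul, smul_eq_mul]
    _ ≤ -((C.natAbs : ℤ) + 1) := this
    _ < C := by omega

lemma exists_even_of_eq_sq {γ : ℤₘ₀} (hγ : γ ≠ 0) (h : ∃ δ : ℤₘ₀, γ = δ*δ) :
    ∃ m : ℤ, γ = ((ofAdd (2*m) : Multiplicative ℤ) : ℤₘ₀) := by
  obtain ⟨δ, rfl⟩ := h
  have hδ : δ ≠ 0 := by rintro rfl; simp at hγ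
  obtain ⟨d, rfl⟩ := WithZero.ne_zero_iff_exists.mp hδ
  refine ⟨Multiplicative.toAdd d, ?_⟩
  rw [← WithZero.coe_mul, WithZero.coe_inj, two_mul, ofAdd_add, ofAdd_toAdd]

lemma counting {k : Type*} [Field k] [Fintype k] (hk : ringChar k ≠ 2) (u w : k) (hu : u ≠ 0) :
    ∃ A B : k, A^2 = u * B^2 + w := by
  obtain ⟨A, B, hAB⟩ := FiniteField.exists_root_sum_quadratic
    (f := (X:k[X])^2 - C w) (g := Polynomial.C (-u) * X^2)
    (degree_X_pow_sub_C (by norm_num) w) (degree_C_mul_X_pow 2 (neg_ne_zero.mpr hu))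
    (FiniteField.odd_card_of_char_ne_two hk)
  refine ⟨A, B, ?_⟩
  simp only [eval_sub, eval_pow, eval_X, eval_C, eval_mul, eval_neg] at hAB
  linear_combination hAB

section

variable {K : Type*} [Field K] [NumberField K] (v : HeightOneSpectrum (𝓞 K))

lemma exists_near (z : v.adicCompletion K) (γ : ℤₘ₀ˣ) :
    ∃ k : K, Valued.v (z - (k : v.adicCompletion K)) < (γ : ℤₘ₀) := by
  have hd : DenseRange ((↑) : K → v.adicCompletion K) :=
    (adicCompletion.ofCompletion_surjective K v).denseRange.comp
      (UniformSpace.Completion.denseRange_coe.comp (WithVal.equiv _).symm.surjective.denseRange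
        (UniformSpace.Completion.continuous_coe _)) (adicCompletion.continuous_ofCompletion K v)
  have hz := hd z
  rw [mem_closure_iff_nhds] at hz
  have hU : {y : v.adicCompletion K | Valued.v (y - z) < (γ : ℤₘ₀)} ∈ nhds z := by
    obtain ⟨w, hw⟩ := valuedAdicCompletion_surjective K v (γ : ℤₘ₀)
    have ho := (Valued.isOpen_ball (v.adicCompletion K) (Valued.v.restrict w)).preimage
      (continuous_sub_right z)
    filter_upwards [ho.mem_nhds (by
      simp only [Set.mem_preimage, Set.mem_setOf_eq, sub_self, Valuation.restrict_lt_iff,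
        map_zero, hw]
      exact zero_lt_iff.mpr (Units.ne_zero γ))] with y hy
    simpa [hw] using hy
  obtain ⟨y, hy1, k, rfl⟩ := hz _ hU
  refine ⟨k, ?_⟩
  have : Valued.v ((k : v.adicCompletion K) - z) < (γ : ℤₘ₀) := hy1
  rwa [← Valuation.map_neg, neg_sub] at this

lemma exists_int_near (k : K) (hk : v.valuation K k ≤ 1) :
    ∃ r : 𝓞 K, v.valuation K (k - algebraMap (𝓞 K) K r) < 1 := by
  obtain ⟨x, y, hy, rfl⟩ := IsFractionRing.div_surjective (A := 𝓞 K) k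
  have hy0 : y ≠ 0 := nonZeroDivisors.ne_zero hy
  have hyK : algebraMap (𝓞 K) K y ≠ 0 :=
    IsFractionRing.to_map_ne_zero_of_mem_nonZeroDivisors hy
  by_cases hx0 : x = 0
  · refine ⟨0, ?_⟩
    simp [hx0]
  have hyne : v.intValuation y ≠ 0 := v.intValuation_ne_zero y hy0
  obtain ⟨n, hn⟩ : ∃ n : ℕ, v.intValuation y = ofAdd (-(n : ℤ)) := by
    have h1 : v.intValuation y ≤ 1 := v.intValuation_le_one y
    set u := WithZero.unzero hyne with hu
    have hcu : (u : ℤₘ₀) = v.intValuation y := WithZero.coe_unzero hyne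
    have hle : Multiplicative.toAdd u ≤ 0 := by
      have : (u : ℤₘ₀) ≤ 1 := hcu ▸ h1
      rwa [← WithZero.coe_one, WithZero.coe_le_coe, ← toAdd_le, toAdd_one] at this
    refine ⟨(-Multiplicative.toAdd u).toNat, ?_⟩
    rw [← hcu]
    congr 1
    rw [Int.toNat_of_nonneg (by omega), neg_neg]
    exact (ofAdd_toAdd u).symm
  have hdy : v.asIdeal ^ n ∣ Ideal.span {y} :=
    (v.intValuation_le_pow_iff_dvd y n).mp (le_of_eq hn)
  have hndy : ¬ v.asIdeal ^ (n+1) ∣ Ideal.span {y} := by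
    intro hdvd
    have := (v.intValuation_le_pow_iff_dvd y (n+1)).mpr hdvd
    rw [hn] at this
    change ((ofAdd (-(n:ℤ)) : Multiplicative ℤ) : ℤₘ₀) ≤ ((ofAdd (-((n+1:ℕ):ℤ)) : Multiplicative ℤ) : ℤₘ₀) at this
    rw [WithZero.coe_le_coe, ofAdd_le] at this
    omega
  have hx : v.intValuation x ≤ v.intValuation y := by
    have := hk
    rw [div_eq_mul_inv, map_mul, map_inv₀, valuation_of_algebraMap, valuation_of_algebraMap] at this
    rw [mul_inv_le_iff₀ (zero_lt_iff.mpr hyne), one_mul] at this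
    exact this
  have hdx : v.asIdeal ^ n ∣ Ideal.span {x} :=
    (v.intValuation_le_pow_iff_dvd x n).mp (hx.trans (le_of_eq hn))
  set J := v.asIdeal ^ (n+1) ⊔ Ideal.span {y} with hJ
  have hprime : Prime (v.asIdeal) := Ideal.prime_of_isPrime v.ne_bot v.isPrime
  have hJdvd : J ∣ v.asIdeal ^ (n+1) := Ideal.dvd_iff_le.mpr le_sup_left
  obtain ⟨i, hi, hJi⟩ := (dvd_prime_pow hprime (n+1)).mp hJdvd
  rw [associated_iff_eq] at hJi
  have hin : i ≤ n := by
    rcases Nat.lt_or_ge i (n+1) with h | h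
    · omega
    · exfalso
      have : i = n + 1 := by omega
      apply hndy
      rw [Ideal.dvd_iff_le]
      calc Ideal.span {y} ≤ J := le_sup_right
        _ = v.asIdeal ^ i := hJi
        _ = v.asIdeal ^ (n+1) := by rw [this]
  have hxJ : x ∈ J := by
    have : x ∈ v.asIdeal ^ n := by
      have := Ideal.dvd_iff_le.mp hdx
      exact this (Ideal.mem_span_singleton_self x)
    have hsub : v.asIdeal ^ n ≤ J := by
      rw [hJi]; exact Ideal.pow_le_pow_right hin
    exact hsub this
  rw [Submodule.mem_sup] at hxJ
  obtain ⟨m, hm, z, hz, hmz⟩ := hxJ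
  rw [Ideal.mem_span_singleton'] at hz
  obtain ⟨r, rfl⟩ := hz
  refine ⟨r, ?_⟩
  have hkey : algebraMap (𝓞 K) K x / algebraMap (𝓞 K) K y - algebraMap (𝓞 K) K r
      = algebraMap (𝓞 K) K m / algebraMap (𝓞 K) K y := by
    field_simp
    rw [← map_mul, ← map_sub, ← hmz]
    ring_nf
  rw [hkey]
  have hmval : v.intValuation m ≤ ofAdd (-((n+1 : ℕ) : ℤ)) := by
    rw [show ((ofAdd (-((n+1:ℕ):ℤ)) : Multiplicative ℤ) : ℤₘ₀) = WithZero.exp (-((n+1:ℕ):ℤ)) from rfl,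
      intValuation_le_pow_iff_dvd]
    rw [Ideal.dvd_iff_le, Ideal.span_le]
    simpa using hm
  rw [div_eq_mul_inv, map_mul, map_inv₀, valuation_of_algebraMap, valuation_of_algebraMap]
  rw [mul_inv_lt_iff₀ (zero_lt_iff.mpr hyne), one_mul, hn]
  calc v.intValuation m ≤ ofAdd (-((n+1:ℕ) : ℤ)) := hmval
    _ < ofAdd (-(n : ℤ)) := by
        rw [WithZero.coe_lt_coe, ofAdd_lt]; push_cast; omega

lemma intVal_two (hv : ringChar (𝓞 K ⧸ v.asIdeal) ≠ 2) : v.intValuation (2 : 𝓞 K) = 1 := by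
  have h2 : (2 : 𝓞 K) ∉ v.asIdeal := by
    intro hmem
    have : ((2 : 𝓞 K) : 𝓞 K ⧸ v.asIdeal) = 0 := Ideal.Quotient.eq_zero_iff_mem.mpr hmem
    have h20 : ((2 : ℕ) : 𝓞 K ⧸ v.asIdeal) = 0 := by push_cast at this ⊢; exact this
    have hdvd : ringChar (𝓞 K ⧸ v.asIdeal) ∣ 2 := (ringChar.spec _ 2).mp h20
    rcases (Nat.prime_two.eq_one_or_self_of_dvd _ hdvd) with h | h
    · exact CharP.ringChar_ne_one h
    · exact hv h
  have hle := v.intValuation_le_one (2 : 𝓞 K)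
  rcases lt_or_eq_of_le hle with hlt | heq
  · exfalso
    rw [intValuation_lt_one_iff_dvd, Ideal.dvd_iff_le, Ideal.span_le] at hlt
    exact h2 (by simpa using hlt)
  · exact heq

lemma val_two (hv : ringChar (𝓞 K ⧸ v.asIdeal) ≠ 2) :
    Valued.v (2 : v.adicCompletion K) = 1 := by
  have : ((2 : K) : v.adicCompletion K) = (2 : v.adicCompletion K) := by
    exact map_ofNat (algebraMap K (v.adicCompletion K)) 2
  rw [← this, valuedAdicCompletion_eq_valuation']
  have : (2 : K) = algebraMap (𝓞 K) K (2 : 𝓞 K) := (map_ofNat _ 2).symm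
  rw [this, valuation_of_algebraMap]
  exact intVal_two v hv

set_option synthInstance.maxHeartbeats 1000000 in
set_option maxHeartbeats 1000000 in
lemma sq_of_close (h2 : Valued.v (2 : v.adicCompletion K) = 1) {s : v.adicCompletion K}
    (hs : Valued.v (s - 1) < 1) : ∃ t : v.adicCompletion K, t^2 = s := by
  classical
  by_cases hd0 : s - 1 = 0
  · exact ⟨1, by rw [one_pow]; linear_combination -hd0⟩
  set d : v.adicCompletion K := s - 1 with hd
  set ε : ℤₘ₀ := Valued.v d with hε
  have hεne : ε ≠ 0 := (Valuation.ne_zero_iff _).mpr hd0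
  have hεlt : ε < 1 := hs
  have hεle : ε ≤ 1 := le_of_lt hεlt
  set f : v.adicCompletion K → v.adicCompletion K := fun e => e^2 + 2*e - d with hf
  set g : v.adicCompletion K → v.adicCompletion K := fun e => e - f e / (2*e + 2) with hg
  set u : ℕ → v.adicCompletion K := fun n => Nat.rec 0 (fun _ e => g e) n with hu
  have hu0 : u 0 = 0 := rfl
  have huS : ∀ n, u (n+1) = g (u n) := fun n => rfl
  have hden : ∀ e : v.adicCompletion K, Valued.v e ≤ ε → Valued.v (2*e+2) = 1 := by
    intro e he
    have h1 : Valued.v (2*e) < Valued.v (2 : v.adicCompletion K) := by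
      rw [map_mul, h2, one_mul]
      exact lt_of_le_of_lt he hεlt
    rw [Valuation.map_add_eq_of_lt_right _ (by rwa [h2] at h1 ⊢ : Valued.v (2*e) < Valued.v (2:v.adicCompletion K)), h2]
  have hdenne : ∀ e : v.adicCompletion K, Valued.v e ≤ ε → (2*e+2) ≠ 0 := by
    intro e he h0
    have := hden e he
    rw [h0, map_zero] at this
    exact zero_ne_one this
  have hkey : ∀ e : v.adicCompletion K, (2*e+2) ≠ 0 → f (g e) = (f e / (2*e+2))^2 := by
    intro e hne
    simp only [hf, hg]
    have : (e^2+2*e-d)/(2*e+2)*(2*e+2) = e^2+2*e-d := div_mul_cancel₀ _ hne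
    linear_combination (-1 : v.adicCompletion K) * this
  have hinv : ∀ n, Valued.v (u n) ≤ ε ∧ Valued.v (f (u n)) ≤ ε^(n+1) := by
    intro n
    induction n with
    | zero =>
      constructor
      · rw [hu0, map_zero]; exact zero_le'
      · rw [hu0]
        have : f 0 = -d := by simp [hf]
        rw [this, Valuation.map_neg, pow_one]
    | succ n ih =>
      obtain ⟨ih1, ih2⟩ := ih
      have hd1 : Valued.v (2*(u n)+2) = 1 := hden _ ih1
      have hdne : (2*(u n)+2) ≠ 0 := hdenne _ ih1
      have hstep : Valued.v (u (n+1) - u n) = Valued.v (f (u n)) := by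
        rw [huS]
        have : g (u n) - u n = -(f (u n) / (2*(u n)+2)) := by
          simp only [hg]; ring
        rw [this, Valuation.map_neg, map_div₀, hd1, div_one]
      constructor
      · have : u (n+1) = (u (n+1) - u n) + u n := by ring
        rw [this]
        refine le_trans (Valuation.map_add _ _ _) (max_le ?_ ih1)
        rw [hstep]
        exact le_trans ih2 (by simpa using pow_anti' hεle (Nat.le_add_left 1 n))
      · rw [huS, hkey _ hdne, map_pow, map_div₀, hd1, div_one]
        calc (Valued.v (f (u n)))^2 ≤ (ε^(n+1))^2 := pow_le_pow_left' ih2 2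
          _ = ε^((n+1)*2) := (pow_mul ε (n+1) 2).symm
          _ ≤ ε^(n+2) := pow_anti' hεle (by omega)
  have htel : ∀ n m, Valued.v (u (n+m) - u n) ≤ ε^(n+1) := by
    intro n m
    induction m with
    | zero => simp
    | succ m ih =>
      have : u (n+(m+1)) - u n = (u (n+m+1) - u (n+m)) + (u (n+m) - u n) := by
        have : n+(m+1) = n+m+1 := by omega
        rw [this]; ring
      rw [this]
      refine le_trans (Valuation.map_add _ _ _) (max_le ?_ ih)
      have h1 : Valued.v (u (n+m+1) - u (n+m)) = Valued.v (f (u (n+m))) := by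
        rw [huS]
        have hd1 : Valued.v (2*(u (n+m))+2) = 1 := hden _ (hinv (n+m)).1
        have : g (u (n+m)) - u (n+m) = -(f (u (n+m)) / (2*(u (n+m))+2)) := by
          simp only [hg]; ring
        rw [this, Valuation.map_neg, map_div₀, hd1, div_one]
      rw [h1]
      exact le_trans (hinv (n+m)).2 (pow_anti' hεle (by omega))
  have hcauchy : CauchySeq u := by
    rw [(Valued.hasBasis_uniformity (v.adicCompletion K) ℤₘ₀).cauchySeq_iff]
    rintro γ -
    obtain ⟨N, hN⟩ := exists_pow_lt' hεne hεlt (MonoidWithZeroHom.ValueGroup₀.embedding γ.1)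
      ((_root_.map_ne_zero _).mpr (Units.ne_zero γ))
    refine ⟨N, fun m hm n hn => ?_⟩
    show Valued.v.restrict _ < γ.1
    rw [Valuation.restrict_lt_iff_lt_embedding]
    rcases le_total m n with h | h
    · obtain ⟨k, rfl⟩ := Nat.exists_eq_add_of_le h
      calc Valued.v (u (m+k) - u m) ≤ ε^(m+1) := htel m k
        _ ≤ ε^(N+1) := pow_anti' hεle (by omega)
        _ < _ := hN
    · obtain ⟨k, rfl⟩ := Nat.exists_eq_add_of_le h
      have : Valued.v (u (n+k) - u n) ≤ ε^(n+1) := htel n k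
      rw [show u (n+k) - u n = -(u n - u (n+k)) by ring, Valuation.map_neg] at this
      calc Valued.v (u n - u (n+k)) ≤ ε^(n+1) := this
        _ ≤ ε^(N+1) := pow_anti' hεle (by omega)
        _ < _ := hN
  obtain ⟨e, he⟩ := cauchySeq_tendsto_of_complete hcauchy
  have hf0 : Tendsto (fun n => f (u n)) atTop (nhds 0) := by
    rw [(Valued.hasBasis_nhds_zero (v.adicCompletion K) ℤₘ₀).tendsto_right_iff]
    rintro γ -
    obtain ⟨N, hN⟩ := exists_pow_lt' hεne hεlt (MonoidWithZeroHom.ValueGroup₀.embedding γ.1)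
      ((_root_.map_ne_zero _).mpr (Units.ne_zero γ))
    filter_upwards [eventually_ge_atTop N] with n hn
    show Valued.v.restrict _ < γ.1
    rw [Valuation.restrict_lt_iff_lt_embedding]
    calc Valued.v (f (u n)) ≤ ε^(n+1) := (hinv n).2
      _ ≤ ε^(N+1) := pow_anti' hεle (by omega)
      _ < _ := hN
  have hfc : Continuous f := by
    simp only [hf]
    fun_prop
  have hfe : Tendsto (fun n => f (u n)) atTop (nhds (f e)) := (hfc.tendsto e).comp he
  have : f e = 0 := tendsto_nhds_unique hfe hf0
  refine ⟨1 + e, ?_⟩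
  simp only [hf] at this
  linear_combination this

lemma val_algebraMap' (r : 𝓞 K) :
    Valued.v (algebraMap (𝓞 K) (v.adicCompletion K) r) = v.intValuation r := by
  rw [show algebraMap (𝓞 K) (v.adicCompletion K) r
      = ((algebraMap (𝓞 K) K r : K) : v.adicCompletion K) from rfl,
    valuedAdicCompletion_eq_valuation', valuation_of_algebraMap]

lemma residue_ne_zero_of_val_one {r : 𝓞 K} (h : v.intValuation r = (1:ℤₘ₀)) :
    Ideal.Quotient.mk v.asIdeal r ≠ 0 := by
  intro h0
  rw [Ideal.Quotient.eq_zero_iff_mem] at h0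
  have hdvd : v.asIdeal ∣ Ideal.span {r} :=
    Ideal.dvd_iff_le.mpr ((Ideal.span_singleton_le_iff_mem _).mpr h0)
  have hlt := (v.intValuation_lt_one_iff_dvd r).mpr hdvd
  rw [h] at hlt
  exact lt_irrefl _ hlt

lemma val_lt_one_of_mem {e : 𝓞 K} (h : e ∈ v.asIdeal) :
    Valued.v (algebraMap (𝓞 K) (v.adicCompletion K) e) < 1 := by
  rw [val_algebraMap']
  have hdvd : v.asIdeal ∣ Ideal.span {e} :=
    Ideal.dvd_iff_le.mpr ((Ideal.span_singleton_le_iff_mem _).mpr h)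
  exact (v.intValuation_lt_one_iff_dvd e).mpr hdvd

lemma exists_int_near' (z : v.adicCompletion K) (hz : Valued.v z ≤ 1) :
    ∃ r : 𝓞 K, Valued.v (z - algebraMap (𝓞 K) (v.adicCompletion K) r) < 1 := by
  obtain ⟨k, hk⟩ := exists_near v z 1
  have hk' : Valued.v (z - (k : v.adicCompletion K)) < 1 := by simpa using hk
  have hkval : v.valuation K k ≤ 1 := by
    rw [← valuedAdicCompletion_eq_valuation' v k]
    have hrw : (k : v.adicCompletion K) = z - (z - (k : v.adicCompletion K)) := by ring
    rw [hrw]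
    exact le_trans (Valuation.map_sub _ _ _) (max_le hz (le_of_lt hk'))
  obtain ⟨r, hr⟩ := exists_int_near v k hkval
  refine ⟨r, ?_⟩
  have hco : ((k - algebraMap (𝓞 K) K r : K) : v.adicCompletion K)
      = (k : v.adicCompletion K) - algebraMap (𝓞 K) (v.adicCompletion K) r := by
    exact map_sub (algebraMap K (v.adicCompletion K)) k (algebraMap (𝓞 K) K r)
  have hval2 : Valued.v ((k : v.adicCompletion K) - algebraMap (𝓞 K) (v.adicCompletion K) r) < 1 := by
    rw [← hco, valuedAdicCompletion_eq_valuation']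
    exact hr
  have hrw : z - algebraMap (𝓞 K) (v.adicCompletion K) r
      = (z - (k : v.adicCompletion K)) + ((k : v.adicCompletion K) - algebraMap (𝓞 K) (v.adicCompletion K) r) := by
    ring
  rw [hrw]
  exact lt_of_le_of_lt (Valuation.map_add _ _ _) (max_lt hk' hval2)

lemma solvable_scale {u w r ρ : v.adicCompletion K} (hr : r ≠ 0) (hρ : ρ ≠ 0)
    (h : HilbertSolvable v u w) : HilbertSolvable v (u*r^2) (w*ρ^2) := by
  obtain ⟨x₀, x₁, x₂, hnt, heq⟩ := h
  refine ⟨x₀, x₁/r, x₂/ρ, ?_, ?_⟩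
  · intro hc
    apply hnt
    rw [Prod.mk.injEq, Prod.mk.injEq] at hc ⊢
    obtain ⟨e0, e1, e2⟩ := hc
    exact ⟨e0, by field_simp at e1; simpa using e1, by field_simp at e2; simpa using e2⟩
  · field_simp
    linear_combination heq

lemma solvable_units (hv : ringChar (𝓞 K ⧸ v.asIdeal) ≠ 2) {u w : v.adicCompletion K}
    (hu : Valued.v u = 1) (hw : Valued.v w = 1) : HilbertSolvable v u w := by
  classical
  haveI hmax : v.asIdeal.IsMaximal := Ideal.IsPrime.isMaximal v.isPrime v.ne_bot
  letI fieldInst : Field (𝓞 K ⧸ v.asIdeal) := Ideal.Quotient.field _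
  letI fintypeInst : Fintype (𝓞 K ⧸ v.asIdeal) := @Fintype.ofFinite _ (Ring.HasFiniteQuotients.finiteQuotient v.ne_bot)
  have h2 : Valued.v (2 : v.adicCompletion K) = 1 := val_two v hv
  obtain ⟨u₀, hu₀⟩ := exists_int_near' v u (le_of_eq hu)
  obtain ⟨w₀, hw₀⟩ := exists_int_near' v w (le_of_eq hw)
  set U := algebraMap (𝓞 K) (v.adicCompletion K) u₀ with hU
  set W := algebraMap (𝓞 K) (v.adicCompletion K) w₀ with hW
  have hUval : Valued.v U = 1 := by
    have hlt : Valued.v (-(u - U)) < Valued.v u := by rw [Valuation.map_neg, hu]; exact hu₀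
    have he : U = u + (-(u - U)) := by ring
    rw [he, Valuation.map_add_eq_of_lt_left _ hlt, hu]
  have hWval : Valued.v W = 1 := by
    have hlt : Valued.v (-(w - W)) < Valued.v w := by rw [Valuation.map_neg, hw]; exact hw₀
    have he : W = w + (-(w - W)) := by ring
    rw [he, Valuation.map_add_eq_of_lt_left _ hlt, hw]
  have hUne : U ≠ 0 := fun h0 => by rw [h0, map_zero] at hUval; exact zero_ne_one hUval
  have hWne : W ≠ 0 := fun h0 => by rw [h0, map_zero] at hWval; exact zero_ne_one hWval
  have hune : u ≠ 0 := fun h0 => by rw [h0, map_zero] at hu; exact zero_ne_one hu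
  have hwne : w ≠ 0 := fun h0 => by rw [h0, map_zero] at hw; exact zero_ne_one hw
  have hu₀int : v.intValuation u₀ = 1 := by rw [← val_algebraMap']; exact hUval
  have hw₀int : v.intValuation w₀ = 1 := by rw [← val_algebraMap']; exact hWval
  have hures := residue_ne_zero_of_val_one v hu₀int
  obtain ⟨A, B, hAB⟩ := counting hv (Ideal.Quotient.mk v.asIdeal u₀)
    (Ideal.Quotient.mk v.asIdeal w₀) hures
  obtain ⟨α, rfl⟩ := Ideal.Quotient.mk_surjective A
  obtain ⟨β, rfl⟩ := Ideal.Quotient.mk_surjective B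
  have hemem : α^2 - u₀*β^2 - w₀ ∈ v.asIdeal := by
    rw [← Ideal.Quotient.eq_zero_iff_mem]
    rw [map_sub, map_sub, map_mul, map_pow, map_pow]
    linear_combination hAB
  have hE : Valued.v (algebraMap (𝓞 K) (v.adicCompletion K) (α^2 - u₀*β^2 - w₀)) < 1 :=
    val_lt_one_of_mem v hemem
  set aF := algebraMap (𝓞 K) (v.adicCompletion K) α with haF
  set bF := algebraMap (𝓞 K) (v.adicCompletion K) β with hbF
  have hEeq : algebraMap (𝓞 K) (v.adicCompletion K) (α^2 - u₀*β^2 - w₀)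
      = aF^2 - U*bF^2 - W := by
    simp only [map_sub, map_mul, map_pow]; rfl
  rw [hEeq] at hE
  have key : HilbertSolvable v U W := by
    by_cases hα1 : Valued.v aF = 1
    · have haFne : aF ≠ 0 := fun h0 => by rw [h0, map_zero] at hα1; exact zero_ne_one hα1
      have hclose : Valued.v ((U*bF^2 + W)/aF^2 - 1) < 1 := by
        have hrw : (U*bF^2 + W)/aF^2 - 1 = (-(aF^2 - U*bF^2 - W))/aF^2 := by
          field_simp
          ring
        rw [hrw, map_div₀, Valuation.map_neg, map_pow, hα1, one_pow, div_one]
        exact hE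
      obtain ⟨σ, hσ⟩ := sq_of_close v h2 hclose
      have hσ' : aF^2 * σ^2 = U*bF^2 + W := by rw [hσ]; field_simp
      refine ⟨aF*σ, bF, 1, ?_, by linear_combination hσ'⟩
      intro hc
      have := congrArg (fun p : _ × _ × _ => p.2.2) hc
      simpa using this
    · have hαle : Valued.v aF ≤ 1 := by rw [val_algebraMap']; exact v.intValuation_le_one α
      have hαlt : Valued.v aF < 1 := lt_of_le_of_ne hαle hα1
      have hα2 : Valued.v (aF^2) < 1 := by
        rw [map_pow, pow_two]
        calc Valued.v aF * Valued.v aF ≤ 1 * Valued.v aF := mul_le_mul_left hαle _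
          _ = Valued.v aF := one_mul _
          _ < 1 := hαlt
      have hSlt : Valued.v (U*bF^2 + W) < 1 := by
        have hrw : U*bF^2 + W = aF^2 + (-(aF^2 - U*bF^2 - W)) := by ring
        rw [hrw]
        exact lt_of_le_of_lt (Valuation.map_add _ _ _)
          (max_lt hα2 (by rwa [Valuation.map_neg]))
      have hBval : Valued.v (U*bF^2) = 1 := by
        have hlt : Valued.v (U*bF^2 + W) < Valued.v (-W) := by
          rw [Valuation.map_neg, hWval]; exact hSlt
        have hrw : U*bF^2 = (U*bF^2 + W) + (-W) := by ring
        rw [hrw, Valuation.map_add_eq_of_lt_right _ hlt, Valuation.map_neg, hWval]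
      have hBne : U*bF^2 ≠ 0 := fun h0 => by rw [h0, map_zero] at hBval; exact zero_ne_one hBval
      have hclose : Valued.v ((-W)/(U*bF^2) - 1) < 1 := by
        have hrw : (-W)/(U*bF^2) - 1 = (-(U*bF^2 + W))/(U*bF^2) := by
          rw [eq_div_iff hBne, sub_mul, div_mul_cancel₀ _ hBne]
          ring
        rw [hrw, map_div₀, Valuation.map_neg, hBval, div_one]
        exact hSlt
      obtain ⟨σ, hσ⟩ := sq_of_close v h2 hclose
      have hσ' : (U*bF^2) * σ^2 = -W := by rw [hσ]; exact mul_div_cancel₀ _ hBne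
      refine ⟨0, bF*σ, 1, ?_, by linear_combination -hσ'⟩
      intro hc
      have := congrArg (fun p : _ × _ × _ => p.2.2) hc
      simpa using this
  have huU : Valued.v (u/U - 1) < 1 := by
    have hrw : u/U - 1 = (u - U)/U := by field_simp
    rw [hrw, map_div₀, hUval, div_one]; exact hu₀
  obtain ⟨σu, hσu⟩ := sq_of_close v h2 huU
  have hwW : Valued.v (w/W - 1) < 1 := by
    have hrw : w/W - 1 = (w - W)/W := by field_simp
    rw [hrw, map_div₀, hWval, div_one]; exact hw₀
  obtain ⟨σw, hσw⟩ := sq_of_close v h2 hwW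
  have hσune : σu ≠ 0 := by
    intro h0
    apply div_ne_zero hune hUne
    rw [← hσu, h0]
    ring
  have hσwne : σw ≠ 0 := by
    intro h0
    apply div_ne_zero hwne hWne
    rw [← hσw, h0]
    ring
  have hsc := solvable_scale v hσune hσwne key
  have hUu : U * σu^2 = u := by rw [hσu]; field_simp
  have hWw : W * σw^2 = w := by rw [hσw]; field_simp
  rwa [hUu, hWw] at hsc

lemma solvable_of_even_even (hv : ringChar (𝓞 K ⧸ v.asIdeal) ≠ 2)
    {a t : v.adicCompletion K} (ha : a ≠ 0) (ht : t ≠ 0)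
    (hae : ∃ m : ℤ, Valued.v a = ((ofAdd (2*m) : Multiplicative ℤ) : ℤₘ₀))
    (hte : ∃ m : ℤ, Valued.v t = ((ofAdd (2*m) : Multiplicative ℤ) : ℤₘ₀)) :
    HilbertSolvable v a t := by
  obtain ⟨ma, hma⟩ := hae
  obtain ⟨mt, hmt⟩ := hte
  obtain ⟨π₀, hπ₀⟩ := v.valuation_exists_uniformizer K
  set π : v.adicCompletion K := (π₀ : v.adicCompletion K) with hπ
  have hπval : Valued.v π = ((ofAdd (-1 : ℤ) : Multiplicative ℤ) : ℤₘ₀) := by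
    rw [hπ, valuedAdicCompletion_eq_valuation', hπ₀]; rfl
  have hπne : π ≠ 0 := by
    intro h0
    rw [h0, map_zero] at hπval
    exact WithZero.coe_ne_zero hπval.symm
  have hzval : ∀ m : ℤ, Valued.v (π ^ m) = ((ofAdd (-m : ℤ) : Multiplicative ℤ) : ℤₘ₀) := by
    intro m
    rw [map_zpow₀, hπval, ← WithZero.coe_zpow]
    congr 1
    rw [← ofAdd_zsmul]
    congr 1
    rw [smul_eq_mul]
    ring
  have hval_unit : ∀ (x : v.adicCompletion K) (m : ℤ),
      Valued.v x = ((ofAdd (2*m) : Multiplicative ℤ) : ℤₘ₀) →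
      Valued.v (x * (π ^ m)^2) = 1 := by
    intro x m hx
    rw [map_mul, map_pow, hzval, hx, ← WithZero.coe_pow, ← WithZero.coe_mul]
    rw [show (1 : ℤₘ₀) = ((1 : Multiplicative ℤ) : ℤₘ₀) from rfl, WithZero.coe_inj]
    have hp2 : (ofAdd (-m) : Multiplicative ℤ)^2 = ofAdd (-2*m) := by
      rw [← ofAdd_nsmul]
      congr 1
      rw [nsmul_eq_mul]
      push_cast
      ring
    rw [hp2, ← ofAdd_add, show (1 : Multiplicative ℤ) = ofAdd (0:ℤ) from rfl]
    congr 1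
    ring
  have hu := hval_unit a ma hma
  have hw := hval_unit t mt hmt
  have key := solvable_units v hv hu hw
  have hrne : (π ^ ma)⁻¹ ≠ 0 := inv_ne_zero (zpow_ne_zero _ hπne)
  have hρne : (π ^ mt)⁻¹ ≠ 0 := inv_ne_zero (zpow_ne_zero _ hπne)
  have hsc := solvable_scale v hrne hρne key
  have hπma : π ^ ma ≠ 0 := zpow_ne_zero _ hπne
  have hπmt : π ^ mt ≠ 0 := zpow_ne_zero _ hπne
  have h1 : a * (π ^ ma)^2 * ((π ^ ma)⁻¹)^2 = a := by field_simp
  have h2 : t * (π ^ mt)^2 * ((π ^ mt)⁻¹)^2 = t := by field_simp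
  rwa [h1, h2] at hsc

lemma norm_of_solvable {a t : v.adicCompletion K} (h2ne : (2 : v.adicCompletion K) ≠ 0)
    (ha : a ≠ 0) (h : HilbertSolvable v a t) :
    ∃ y z : v.adicCompletion K, y^2 - a*z^2 = t := by
  obtain ⟨x₀, x₁, x₂, hnt, heq⟩ := h
  by_cases hx₂ : x₂ = 0
  · subst hx₂
    have hsq : x₀^2 = a * x₁^2 := by linear_combination heq
    have hx₁ : x₁ ≠ 0 := by
      rintro rfl
      apply hnt
      have h0 : x₀^2 = 0 := by linear_combination hsq
      have hx0 : x₀ = 0 := pow_eq_zero_iff (n := 2) (by norm_num) |>.mp h0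
      simp [hx0]
    set s := x₀/x₁ with hs
    have hs2 : s^2 = a := by
      rw [hs]; field_simp; linear_combination hsq
    have hsne : s ≠ 0 := by
      intro h0
      rw [h0] at hs2
      exact ha (by linear_combination -hs2)
    refine ⟨(t+1)/2, (1-t)/(2*s), ?_⟩
    rw [← hs2]
    field_simp
    ring
  · refine ⟨x₀/x₂, x₁/x₂, ?_⟩
    field_simp
    linear_combination heq

lemma parity {b c : v.adicCompletion K} (hb : Valued.v b ≤ 1) (hc : Valued.v c ≤ 1)
    (x : v.adicCompletion K) (h1 : c*x^2+1 ≠ 0) (h2 : b^2*(c*x^2+1) + x^2 ≠ 0) :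
    (∃ m : ℤ, Valued.v (c*x^2+1) = ((ofAdd (2*m) : Multiplicative ℤ) : ℤₘ₀)) ∨
    (∃ m : ℤ, Valued.v (b^2*(c*x^2+1)+x^2) = ((ofAdd (2*m) : Multiplicative ℤ) : ℤₘ₀)) := by
  set t₁ := c*x^2+1 with ht₁
  set t₂ := b^2*t₁+x^2 with ht₂
  have hx2 : Valued.v (x^2) = (Valued.v x)*(Valued.v x) := by rw [map_pow, pow_two]
  by_cases hx : Valued.v x ≤ 1
  · have hcx2 : Valued.v (c*x^2) ≤ 1 := by
      rw [map_mul, hx2]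
      exact mul_le_one' hc (mul_le_one' hx hx)
    by_cases hVt₁ : Valued.v t₁ = 1
    · exact Or.inl ⟨0, by rw [hVt₁]; norm_num⟩
    · have ht₁le : Valued.v t₁ ≤ 1 := by
        rw [ht₁]
        exact le_trans (Valuation.map_add _ _ _) (max_le hcx2 (le_of_eq (map_one _)))
      have ht₁lt : Valued.v t₁ < 1 := lt_of_le_of_ne ht₁le hVt₁
      have hcx1 : Valued.v (c*x^2) = 1 := by
        have hrw : c*x^2 = t₁ + (-1) := by rw [ht₁]; ring
        rw [hrw, Valuation.map_add_eq_of_lt_right _ (by rwa [Valuation.map_neg, map_one]),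
          Valuation.map_neg, map_one]
      have hx21 : Valued.v (x^2) = 1 := by
        rw [map_mul] at hcx1
        refine le_antisymm (by rw [hx2]; exact mul_le_one' hx hx) ?_
        calc (1:ℤₘ₀) = Valued.v c * Valued.v (x^2) := hcx1.symm
          _ ≤ 1 * Valued.v (x^2) := mul_le_mul_left hc _
          _ = Valued.v (x^2) := one_mul _
      have hbsq : Valued.v (b^2) ≤ 1 := by rw [map_pow, pow_two]; exact mul_le_one' hb hb
      have hbt : Valued.v (b^2*t₁) < Valued.v (x^2) := by
        rw [hx21, map_mul]
        calc Valued.v (b^2) * Valued.v t₁ ≤ 1 * Valued.v t₁ := mul_le_mul_left hbsq _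
          _ = Valued.v t₁ := one_mul _
          _ < 1 := ht₁lt
      refine Or.inr ⟨0, ?_⟩
      rw [ht₂, Valuation.map_add_eq_of_lt_right _ hbt, hx21]
      norm_num
  · push_neg at hx
    have hxne : Valued.v x ≠ 0 := ne_of_gt (lt_trans zero_lt_one hx)
    have hx2gt : 1 < Valued.v (x^2) := by
      rw [map_pow]
      calc (1:ℤₘ₀) < Valued.v x := hx
        _ ≤ Valued.v x ^ 2 := le_self_pow₀ (le_of_lt hx) (by norm_num)
    have hb2le : Valued.v (b^2) ≤ 1 := by rw [map_pow, pow_two]; exact mul_le_one' hb hb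
    have ht₁le : Valued.v t₁ ≤ Valued.v (x^2) := by
      rw [ht₁]
      refine le_trans (Valuation.map_add _ _ _) (max_le ?_ ?_)
      · rw [map_mul]
        calc Valued.v c * Valued.v (x^2) ≤ 1 * Valued.v (x^2) := mul_le_mul_left hc _
          _ = Valued.v (x^2) := one_mul _
      · rw [map_one]; exact le_of_lt hx2gt
    by_cases heq : Valued.v (b^2*t₁) = Valued.v (x^2)
    · rw [map_mul] at heq
      have hbne : Valued.v (b^2) ≠ 0 := by
        intro h0
        rw [h0, zero_mul] at heq
        rw [hx2] at heq
        exact hxne (by simpa using (mul_self_eq_zero).mp heq.symm)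
      have ht₁ne : Valued.v t₁ ≠ 0 := (Valuation.ne_zero_iff _).mpr h1
      refine Or.inl (exists_even_of_eq_sq ht₁ne ?_)
      refine ⟨Valued.v x / Valued.v b, ?_⟩
      have hbb : Valued.v (b^2) = Valued.v b * Valued.v b := by rw [map_pow, pow_two]
      rw [hbb] at heq hbne
      have hbne' : Valued.v b ≠ 0 := fun h0 => hbne (by rw [h0, mul_zero])
      field_simp
      rw [← map_pow _ x 2, ← heq, pow_two]
      exact mul_comm _ _
    · have hlt : Valued.v (b^2*t₁) < Valued.v (x^2) := by
        rcases lt_or_gt_of_ne heq with h | h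
        · exact h
        · exfalso
          have hle2 : Valued.v (b^2*t₁) ≤ Valued.v t₁ := by
            rw [map_mul]
            calc Valued.v (b^2) * Valued.v t₁ ≤ 1 * Valued.v t₁ := mul_le_mul_left hb2le _
              _ = Valued.v t₁ := one_mul _
          exact absurd (lt_of_le_of_lt (hle2.trans ht₁le) h) (lt_irrefl _)
      have ht₂v : Valued.v t₂ = Valued.v (x^2) := by
        rw [ht₂, Valuation.map_add_eq_of_lt_right _ hlt]
      have ht₂ne : Valued.v t₂ ≠ 0 := (Valuation.ne_zero_iff _).mpr h2
      exact Or.inr (exists_even_of_eq_sq ht₂ne ⟨Valued.v x, by rw [ht₂v, hx2]⟩)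

lemma bridge_nonneg {x : v.adicCompletion K} (h : 0 ≤ adicAddVal v x) : Valued.v x ≤ 1 := by
  by_cases hx : x = 0
  · rw [hx, map_zero]; exact zero_le'
  · rw [adicAddVal, dif_neg hx] at h
    set u := WithZero.unzero ((Valued.v).ne_zero_iff.mpr hx) with hu
    have h' : (0:ℤ) ≤ -Multiplicative.toAdd u := by exact_mod_cast h
    have hule : u ≤ 1 := by
      rw [← toAdd_le, toAdd_one]; omega
    calc Valued.v x = (u : ℤₘ₀) := (WithZero.coe_unzero _).symm
      _ ≤ ((1 : Multiplicative ℤ) : ℤₘ₀) := WithZero.coe_le_coe.mpr hule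
      _ = 1 := rfl

lemma bridge_even {a : v.adicCompletion K} (ha : a ≠ 0)
    (h : ∃ m : ℤ, adicAddVal v a = (2*m : ℤ)) :
    ∃ m : ℤ, Valued.v a = ((ofAdd (2*m) : Multiplicative ℤ) : ℤₘ₀) := by
  obtain ⟨m, hm⟩ := h
  rw [adicAddVal, dif_neg ha] at hm
  set u := WithZero.unzero ((Valued.v).ne_zero_iff.mpr ha) with hu
  have h' : -Multiplicative.toAdd u = 2*m := by exact_mod_cast hm
  refine ⟨-m, ?_⟩
  calc Valued.v a = (u : ℤₘ₀) := (WithZero.coe_unzero _).symm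
    _ = ((ofAdd (2*(-m)) : Multiplicative ℤ) : ℤₘ₀) := by
        rw [WithZero.coe_inj, ← ofAdd_toAdd u]
        congr 1
        omega

end

end ChateletAux

open ChateletAux in
/-- Let `v` be an odd finite place of a number field `K` and `a, b, c ∈ K_v` with
`a ≠ 0`, `v(a)` even, `v(b) ≥ 0` and `v(c) ≥ 0`. Then for every `x ∈ K_v` such that
`cx² + 1 ≠ 0` and `(1+cb²)x² + b² ≠ 0`, it is impossible that both `(a, cx² + 1)_v = -1` and
`(a, (1+cb²)x² + b²)_v = -1`. Consequently, for every `x` with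
`(cx²+1)((1+cb²)x²+b²) ≠ 0`, the equation `y² - a z² = (cx²+1)((1+cb²)x²+b²)` has a solution
`(y,z) ∈ K_v²` whenever `(a, cx²+1)_v = (a, (1+cb²)x²+b²)_v`. -/
theorem chatelet_factors_not_both_neg_one_of_even_val
    {K : Type*} [Field K] [NumberField K] (v : HeightOneSpectrum (𝓞 K))
    (hv : IsOddPlace v) (a b c : v.adicCompletion K) (ha : a ≠ 0)
    (hva : ∃ m : ℤ, adicAddVal v a = (2 * m : ℤ))
    (hvb : 0 ≤ adicAddVal v b) (hvc : 0 ≤ adicAddVal v c) :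
    (∀ x : v.adicCompletion K, c * x ^ 2 + 1 ≠ 0 → (1 + c * b ^ 2) * x ^ 2 + b ^ 2 ≠ 0 →
      ¬(¬HilbertSolvable v a (c * x ^ 2 + 1) ∧
        ¬HilbertSolvable v a ((1 + c * b ^ 2) * x ^ 2 + b ^ 2))) ∧
    (∀ x : v.adicCompletion K, (c * x ^ 2 + 1) * ((1 + c * b ^ 2) * x ^ 2 + b ^ 2) ≠ 0 →
      (HilbertSolvable v a (c * x ^ 2 + 1) ↔
        HilbertSolvable v a ((1 + c * b ^ 2) * x ^ 2 + b ^ 2)) →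
      ∃ y z : v.adicCompletion K,
        y ^ 2 - a * z ^ 2 = (c * x ^ 2 + 1) * ((1 + c * b ^ 2) * x ^ 2 + b ^ 2)) := by
  have hva' := bridge_even v ha hva
  have hvb' := bridge_nonneg v hvb
  have hvc' := bridge_nonneg v hvc
  have hvchar : ringChar (𝓞 K ⧸ v.asIdeal) ≠ 2 := hv
  have h2val : Valued.v (2 : v.adicCompletion K) = 1 := val_two v hvchar
  have h2ne : (2 : v.adicCompletion K) ≠ 0 := fun h0 => by
    rw [h0, map_zero] at h2val; exact zero_ne_one h2val
  have part1 : ∀ x : v.adicCompletion K, c * x ^ 2 + 1 ≠ 0 →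
      (1 + c * b ^ 2) * x ^ 2 + b ^ 2 ≠ 0 →
      ¬(¬HilbertSolvable v a (c * x ^ 2 + 1) ∧
        ¬HilbertSolvable v a ((1 + c * b ^ 2) * x ^ 2 + b ^ 2)) := by
    intro x hx1 hx2 hcon
    obtain ⟨n1, n2⟩ := hcon
    have hrw : (1 + c * b ^ 2) * x ^ 2 + b ^ 2 = b^2*(c*x^2+1) + x^2 := by ring
    have hx2' : b^2*(c*x^2+1) + x^2 ≠ 0 := by rw [← hrw]; exact hx2
    rcases parity v hvb' hvc' x hx1 hx2' with he | he
    · exact n1 (solvable_of_even_even v hvchar ha hx1 hva' he)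
    · refine n2 ?_
      rw [hrw]
      exact solvable_of_even_even v hvchar ha hx2' hva' he
  refine ⟨part1, ?_⟩
  intro x hprod hiff
  have hx1 : c * x ^ 2 + 1 ≠ 0 := left_ne_zero_of_mul hprod
  have hx2 : (1 + c * b ^ 2) * x ^ 2 + b ^ 2 ≠ 0 := right_ne_zero_of_mul hprod
  have hS1 : HilbertSolvable v a (c * x ^ 2 + 1) := by
    by_contra hn
    exact part1 x hx1 hx2 ⟨hn, fun h => hn (hiff.mpr h)⟩
  have hS2 : HilbertSolvable v a ((1 + c * b ^ 2) * x ^ 2 + b ^ 2) := hiff.mp hS1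
  obtain ⟨y1, z1, hyz1⟩ := norm_of_solvable v h2ne ha hS1
  obtain ⟨y2, z2, hyz2⟩ := norm_of_solvable v h2ne ha hS2
  refine ⟨y1*y2 + a*z1*z2, y1*z2 + y2*z1, ?_⟩
  linear_combination (y2^2 - a*z2^2) * hyz1 + (c * x ^ 2 + 1) * hyz2
end

section
/- Let v be an odd finite place of a number field K and let a, b, c ∈ K_v^× with v(b) > 0 and v(c) ≥ 0. Then for every x ∈ K_v such that cx² + 1 ≠ 0 and (1+cb²)x² + b² ≠ 0, it is impossible that both (a, cx² + 1)_v = −1 and (a, (1+cb²)x² + b²)_v = −1. -/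
open IsDedekindDomain IsDedekindDomain.HeightOneSpectrum NumberField
open scoped Multiplicative
local notation "ℤₘ₀" => WithZero (Multiplicative ℤ)

open Multiplicative WithZero in
/-- In `ℤₘ₀`, powers of an element `< 1` eventually get below any nonzero element. -/
lemma zm0_exists_pow_lt_s12 (α β : ℤₘ₀) (hα : α < 1) (hβ : β ≠ 0) : ∃ n : ℕ, α ^ n < β := by
  rcases eq_or_ne α 0 with rfl | h0
  · exact ⟨1, by simpa using (zero_lt_iff.mpr hβ)⟩
  · lift α to Multiplicative ℤ using h0
    lift β to Multiplicative ℤ using hβ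
    refine ⟨(toAdd β).natAbs + 1, ?_⟩
    rw [← WithZero.coe_pow, WithZero.coe_lt_coe]
    rw [← WithZero.coe_one, WithZero.coe_lt_coe] at hα
    rw [← Multiplicative.toAdd_lt] at hα ⊢
    rw [toAdd_pow, toAdd_one] at *
    have h1 : toAdd α ≤ -1 := by omega
    have : ((toAdd β).natAbs + 1 : ℤ) * toAdd α ≤ ((toAdd β).natAbs + 1 : ℤ) * (-1) := by
      apply mul_le_mul_of_nonneg_left h1; positivity
    have h2 : -((toAdd β).natAbs + 1 : ℤ) < toAdd β := by omega
    calc (((toAdd β).natAbs + 1 : ℕ) : ℤ) • toAdd α = ((toAdd β).natAbs + 1 : ℤ) * toAdd α := by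
          push_cast [zsmul_eq_mul]; ring
      _ ≤ -((toAdd β).natAbs + 1 : ℤ) := by linarith
      _ < toAdd β := h2

/-- Powers of an element `≤ 1` of `ℤₘ₀` are antitone. -/
lemma zm0_pow_anti {α : ℤₘ₀} (hα : α ≤ 1) {m n : ℕ} (h : m ≤ n) : α ^ n ≤ α ^ m := by
  obtain ⟨k, rfl⟩ := Nat.exists_eq_add_of_le h
  rw [pow_add]
  exact mul_le_of_le_one_right' (pow_le_one₀ zero_le' hα)

open Filter in
/-- Hensel-type lemma: in a complete field with a `ℤₘ₀`-valuation in which `2` is a unit,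
any element at valuative distance `< 1` from `1` is a square. -/
lemma sq_of_v_sub_one_lt {F : Type*} [Field F] [val : Valued F ℤₘ₀] [CompleteSpace F]
    (h2 : Valued.v (2 : F) = 1) (u : F) (hu : Valued.v (u - 1) < 1) :
    ∃ s : F, s ^ 2 = u := by
  set ε := u - 1 with hε
  rcases eq_or_ne ε 0 with h0 | h0
  · exact ⟨1, by rw [one_pow]; exact (sub_eq_zero.mp h0).symm⟩
  have h2' : (2 : F) ≠ 0 := fun h => by simp [h] at h2
  have hvinv : Valued.v (2⁻¹ : F) = 1 := by
    rw [map_inv₀, h2, inv_one]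
  set e : ℤₘ₀ := Valued.v ε with he
  have he1 : e < 1 := hu
  have he0 : e ≠ 0 := (Valuation.ne_zero_iff _).mpr h0
  -- the Newton sequence
  let t : ℕ → F := fun n => Nat.rec (0 : F) (fun _ y => (ε - y ^ 2) * 2⁻¹) n
  have ht0 : t 0 = 0 := rfl
  have htsucc : ∀ n, t (n + 1) = (ε - t n ^ 2) * 2⁻¹ := fun n => rfl
  -- bound on t n
  have hA : ∀ n, Valued.v (t n) ≤ e := by
    intro n
    induction n with
    | zero => simp [ht0]
    | succ n ih =>
      rw [htsucc, Valuation.map_mul, hvinv, mul_one]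
      refine le_trans (Valuation.map_sub _ _ _) (max_le le_rfl ?_)
      rw [pow_two, Valuation.map_mul]
      exact le_trans (mul_le_mul' ih ih) (mul_le_of_le_one_right' he1.le)
  -- bound on consecutive differences
  have hB : ∀ n, Valued.v (t (n + 1) - t n) ≤ e ^ (n + 1) := by
    intro n
    induction n with
    | zero =>
      rw [htsucc 0, ht0]
      simp only [ne_eq, OfNat.ofNat_ne_zero, not_false_eq_true, zero_pow, sub_zero,
        Valuation.map_mul, hvinv, mul_one, pow_one, sub_zero]
      rw [zero_add, pow_one]
    | succ n ih =>
      have key : t (n + 2) - t (n + 1) = (t n - t (n + 1)) * (t n + t (n + 1)) * 2⁻¹ := by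
        have e1 : t (n + 2) = (ε - t (n + 1) ^ 2) * 2⁻¹ := htsucc (n + 1)
        have e2 : t (n + 1) = (ε - t n ^ 2) * 2⁻¹ := htsucc n
        rw [e1]
        nth_rewrite 2 [e2]
        nth_rewrite 3 [e2]
        nth_rewrite 2 [e2]
        ring
      rw [key, Valuation.map_mul, hvinv, mul_one, Valuation.map_mul]
      have h1 : Valued.v (t n - t (n + 1)) ≤ e ^ (n + 1) := by
        rw [← Valuation.map_neg, neg_sub]; exact ih
      have hsum : Valued.v (t n + t (n + 1)) ≤ e :=
        le_trans (Valuation.map_add _ _ _) (max_le (hA n) (hA (n + 1)))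
      calc Valued.v (t n - t (n + 1)) * Valued.v (t n + t (n + 1)) ≤ e ^ (n + 1) * e :=
            mul_le_mul' h1 hsum
        _ = e ^ (n + 2) := by rw [← pow_succ]
  -- bound on general differences
  have hC : ∀ m n, m ≤ n → Valued.v (t n - t m) ≤ e ^ (m + 1) := by
    intro m n h
    induction n with
    | zero => interval_cases m; simp [ht0]
    | succ n ih =>
      rcases Nat.lt_or_ge m (n + 1) with hm | hm
      · have hmn : m ≤ n := Nat.lt_succ_iff.mp hm
        have : t (n + 1) - t m = (t (n + 1) - t n) + (t n - t m) := by ring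
        rw [this]
        refine le_trans (Valuation.map_add _ _ _) (max_le ?_ (ih hmn))
        exact le_trans (hB n) (zm0_pow_anti he1.le (by omega))
      · have : m = n + 1 := le_antisymm h hm
        subst this; simp
  -- Cauchy
  have hcauchy : CauchySeq t := by
    rw [(Valued.hasBasis_uniformity F ℤₘ₀).cauchySeq_iff]
    intro γ _
    set g : ℤₘ₀ := MonoidWithZeroHom.ValueGroup₀.embedding γ.1 with hg
    have hg0 : g ≠ 0 := fun h => γ.ne_zero
      (MonoidWithZeroHom.ValueGroup₀.embedding_injective (h.trans (map_zero _).symm))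
    obtain ⟨N, hN⟩ := zm0_exists_pow_lt_s12 e g he1 hg0
    refine ⟨N, fun m hm n hn => ?_⟩
    simp only [Set.mem_setOf_eq]
    rw [Valuation.restrict_lt_iff_lt_embedding]
    rcases le_total m n with hmn | hmn
    · calc Valued.v (t n - t m) ≤ e ^ (m + 1) := hC m n hmn
        _ ≤ e ^ N := zm0_pow_anti he1.le (by omega)
        _ < g := hN
    · have : Valued.v (t n - t m) = Valued.v (t m - t n) := by
        rw [← Valuation.map_neg, neg_sub]
      rw [this]
      calc Valued.v (t m - t n) ≤ e ^ (n + 1) := hC n m hmn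
        _ ≤ e ^ N := zm0_pow_anti he1.le (by omega)
        _ < g := hN
  obtain ⟨s, hs⟩ := cauchySeq_tendsto_of_complete hcauchy
  -- the limit satisfies the fixed point equation
  have hcont : Continuous (fun y : F => (ε - y ^ 2) * 2⁻¹) := by continuity
  have h1 : Tendsto (fun n => t (n + 1)) atTop (nhds s) :=
    hs.comp (tendsto_add_atTop_nat 1)
  have h2t : Tendsto (fun n => (ε - t n ^ 2) * 2⁻¹) atTop (nhds ((ε - s ^ 2) * 2⁻¹)) :=
    (hcont.tendsto s).comp hs
  have hfix : s = (ε - s ^ 2) * 2⁻¹ := by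
    refine tendsto_nhds_unique h1 ?_
    simpa only [htsucc] using h2t
  refine ⟨1 + s, ?_⟩
  have : s * 2 = ε - s ^ 2 := by
    field_simp at hfix
    linear_combination hfix
  have : (1 + s) ^ 2 = 1 + ε := by ring_nf; linear_combination this
  rw [this, hε]; ring

lemma adicAddVal_pos_iff {K : Type*} [Field K] [NumberField K]
    (v : HeightOneSpectrum (𝓞 K)) {y : v.adicCompletion K} (hy : y ≠ 0) :
    0 < adicAddVal v y ↔ Valued.v y < 1 := by
  rw [adicAddVal, dif_neg hy]
  have hc := WithZero.coe_unzero ((Valued.v).ne_zero_iff.mpr hy)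
  rw [show ((0 : WithTop ℤ)) = ((0 : ℤ) : WithTop ℤ) from rfl, WithTop.coe_lt_coe]
  conv_rhs => rw [← hc, ← WithZero.coe_one, WithZero.coe_lt_coe,
    ← Multiplicative.toAdd_lt, toAdd_one]
  omega

lemma adicAddVal_nonneg_iff {K : Type*} [Field K] [NumberField K]
    (v : HeightOneSpectrum (𝓞 K)) {y : v.adicCompletion K} (hy : y ≠ 0) :
    0 ≤ adicAddVal v y ↔ Valued.v y ≤ 1 := by
  rw [adicAddVal, dif_neg hy]
  have hc := WithZero.coe_unzero ((Valued.v).ne_zero_iff.mpr hy)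
  rw [show ((0 : WithTop ℤ)) = ((0 : ℤ) : WithTop ℤ) from rfl, WithTop.coe_le_coe]
  conv_rhs => rw [← hc, ← WithZero.coe_one, WithZero.coe_le_coe,
    ← Multiplicative.toAdd_le, toAdd_one]
  omega

set_option synthInstance.maxHeartbeats 1000000 in
lemma two_not_mem_of_odd {K : Type*} [Field K] [NumberField K]
    (v : HeightOneSpectrum (𝓞 K)) (hv : IsOddPlace v) : (2 : 𝓞 K) ∉ v.asIdeal := by
  intro hmem
  haveI := v.isPrime
  haveI : IsDomain (𝓞 K ⧸ v.asIdeal) := Ideal.Quotient.isDomain v.asIdeal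
  haveI hnt : Nontrivial (𝓞 K ⧸ v.asIdeal) := inferInstance
  have hq2 : (Ideal.Quotient.mk v.asIdeal) (2 : 𝓞 K) = 0 :=
    Ideal.Quotient.eq_zero_iff_mem.mpr hmem
  have hq : ((2 : ℕ) : 𝓞 K ⧸ v.asIdeal) = 0 := by
    rw [Nat.cast_ofNat, ← map_ofNat (Ideal.Quotient.mk v.asIdeal) 2]
    exact hq2
  have hdvd : ringChar (𝓞 K ⧸ v.asIdeal) ∣ 2 := ringChar.dvd hq
  rcases CharP.char_is_prime_or_zero (𝓞 K ⧸ v.asIdeal) (ringChar (𝓞 K ⧸ v.asIdeal)) with hp | hp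
  · exact hv ((Nat.prime_dvd_prime_iff_eq hp Nat.prime_two).mp hdvd)
  · rw [hp] at hdvd; omega

lemma valued_two_eq_one {K : Type*} [Field K] [NumberField K]
    (v : HeightOneSpectrum (𝓞 K)) (hv : IsOddPlace v) :
    Valued.v (2 : v.adicCompletion K) = 1 := by
  have h2K : ((2 : K) : v.adicCompletion K) = 2 := by
    have : ((2 : K) : v.adicCompletion K) = algebraMap K (v.adicCompletion K) (2 : K) := rfl
    rw [this, map_ofNat]
  rw [← h2K, valuedAdicCompletion_eq_valuation']
  rw [show (2 : K) = algebraMap (𝓞 K) K (2 : 𝓞 K) from (map_ofNat _ 2).symm,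
    valuation_of_algebraMap, intValuation_apply]
  refine le_antisymm (intValuation_le_one v _) (le_of_not_gt fun hlt => ?_)
  exact two_not_mem_of_odd v hv
    (Ideal.dvd_span_singleton.mp ((intValuation_lt_one_iff_dvd v _).mp hlt))

/-- Let `v` be an odd finite place of a number field `K` and `a, b, c ∈ K_v^×`
with `v(b) > 0` and `v(c) ≥ 0`. Then for every `x ∈ K_v` such that `cx² + 1 ≠ 0` and
`(1+cb²)x² + b² ≠ 0`, it is impossible that both `(a, cx² + 1)_v = -1` and
`(a, (1+cb²)x² + b²)_v = -1`. -/
theorem chatelet_factors_not_both_neg_one_of_pos_val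
    {K : Type*} [Field K] [NumberField K] (v : HeightOneSpectrum (𝓞 K))
    (hv : IsOddPlace v) (a b c : v.adicCompletion K) (ha : a ≠ 0) (hb : b ≠ 0) (hc : c ≠ 0)
    (hvb : 0 < adicAddVal v b) (hvc : 0 ≤ adicAddVal v c) :
    ∀ x : v.adicCompletion K, c * x ^ 2 + 1 ≠ 0 → (1 + c * b ^ 2) * x ^ 2 + b ^ 2 ≠ 0 →
      ¬(¬HilbertSolvable v a (c * x ^ 2 + 1) ∧
        ¬HilbertSolvable v a ((1 + c * b ^ 2) * x ^ 2 + b ^ 2)) := by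
  intro x hx1 hx2
  rintro ⟨h1, h2⟩
  have hvb' : Valued.v b < 1 := (adicAddVal_pos_iff v hb).mp hvb
  have hvc' : Valued.v c ≤ 1 := (adicAddVal_nonneg_iff v hc).mp hvc
  have h2F : Valued.v (2 : v.adicCompletion K) = 1 := valued_two_eq_one v hv
  have hb2 : Valued.v (b ^ 2) < 1 := by
    rw [pow_two, Valuation.map_mul]
    calc Valued.v b * Valued.v b ≤ 1 * Valued.v b := mul_le_mul_left hvb'.le _
      _ = Valued.v b := one_mul _
      _ < 1 := hvb'
  rcases lt_or_ge (Valued.v (c * x ^ 2)) 1 with hcx | hcx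
  · -- the first factor is a square
    obtain ⟨s, hs⟩ := sq_of_v_sub_one_lt h2F (c * x ^ 2 + 1) (by rwa [add_sub_cancel_right])
    exact h1 ⟨s, 0, 1, by simp, by rw [hs]; ring⟩
  · -- the second factor is a square
    have hx0 : x ≠ 0 := by
      rintro rfl
      simp at hcx
    have hx2v : (1 : ℤₘ₀) ≤ Valued.v (x ^ 2) := by
      have hm : Valued.v (c * x ^ 2) = Valued.v c * Valued.v (x ^ 2) := Valuation.map_mul _ _ _
      calc (1 : ℤₘ₀) ≤ Valued.v c * Valued.v (x ^ 2) := by rw [← hm]; exact hcx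
        _ ≤ 1 * Valued.v (x ^ 2) := mul_le_mul_left hvc' _
        _ = Valued.v (x ^ 2) := one_mul _
    have hx2ne : Valued.v (x ^ 2) ≠ 0 := by
      intro h; rw [h] at hx2v; simp at hx2v
    set w' : v.adicCompletion K := (1 + c * b ^ 2) + b ^ 2 / x ^ 2 with hw'
    have hkey : w' - 1 = c * b ^ 2 + b ^ 2 / x ^ 2 := by rw [hw']; ring
    have hv1 : Valued.v (c * b ^ 2) < 1 := by
      calc Valued.v (c * b ^ 2) = Valued.v c * Valued.v (b ^ 2) := Valuation.map_mul _ _ _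
        _ ≤ 1 * Valued.v (b ^ 2) := mul_le_mul_left hvc' _
        _ = Valued.v (b ^ 2) := one_mul _
        _ < 1 := hb2
    have hv2 : Valued.v (b ^ 2 / x ^ 2) < 1 := by
      rw [div_eq_mul_inv, Valuation.map_mul, map_inv₀]
      have hinv : (Valued.v (x ^ 2))⁻¹ ≤ 1 := by
        calc (Valued.v (x ^ 2))⁻¹ = 1 * (Valued.v (x ^ 2))⁻¹ := (one_mul _).symm
          _ ≤ Valued.v (x ^ 2) * (Valued.v (x ^ 2))⁻¹ := mul_le_mul_left hx2v _
          _ = 1 := mul_inv_cancel₀ hx2ne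
      calc Valued.v (b ^ 2) * (Valued.v (x ^ 2))⁻¹ ≤ Valued.v (b ^ 2) * 1 :=
            mul_le_mul_right hinv _
        _ = Valued.v (b ^ 2) := mul_one _
        _ < 1 := hb2
    have hlt : Valued.v (w' - 1) < 1 := by
      rw [hkey]
      exact lt_of_le_of_lt (Valuation.map_add _ _ _) (max_lt hv1 hv2)
    obtain ⟨s, hs⟩ := sq_of_v_sub_one_lt h2F w' hlt
    have hx2ne' : x ^ 2 ≠ 0 := pow_ne_zero _ hx0
    have hsq : (s * x) ^ 2 = (1 + c * b ^ 2) * x ^ 2 + b ^ 2 := by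
      rw [mul_pow, hs, hw']
      field_simp
    exact h2 ⟨s * x, 0, 1, by simp, by rw [hsq]; ring⟩
end
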